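/- arXiv:1404.4127 — 6 statements merged into one kernel-verified Lean document; each statement's English description precedes it below -/
import Mathlib

section
/- Let M be a finite matroid that is not pseudomodular. Then there exist a flat B of M and a subset A of the ground set such that r(A/B) = 1 and A has no pseudointersection with B (i.e. A ⋪ B). -/
/-- A matroid on a finite ground set `N`, given by an integer-valued rank
function satisfying the standard rank axioms. -/
structure FinMatroid (N : Type) [Fintype N] [DecidableEq N] where
  r : Finset N → ℤ
  r_nonneg : ∀ A, 0 ≤ r A
  r_le_card : ∀ A, r A ≤ (A.card : ℤ)
  r_mono : ∀ ⦃A B : Finset N⦄, A ⊆ B → r A ≤ r B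
  submodular : ∀ A B, r (A ∪ B) + r (A ∩ B) ≤ r A + r B

namespace FinMatroid

variable {N : Type} [Fintype N] [DecidableEq N]

/-- A set `F` is a flat if adding any element outside of `F` increases the rank. -/
def IsFlat (M : FinMatroid N) (F : Finset N) : Prop :=
  ∀ n ∉ F, M.r F < M.r (insert n F)

instance (M : FinMatroid N) (F : Finset N) : Decidable (M.IsFlat F) := by
  unfold IsFlat; infer_instance

/-- The Δ function of a (multi-indexed) family of sets: `Δ(C) = Σ_{S ⊆ I} (−1)^{|S|} r(F_S)`,
where `F_S` is the intersection of the members indexed by `S` for nonempty `S`, and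
`F_∅` is the union of all members of the family. -/
def delta (M : FinMatroid N) {ι : Type} [Fintype ι] [DecidableEq ι]
    (F : ι → Finset N) : ℤ :=
  ∑ S : Finset ι, (-1 : ℤ) ^ S.card *
    M.r (if S.Nonempty then S.inf F else Finset.univ.sup F)

/-- `M` is `n`-flat if `Δ(C) ≤ 0` for every family `C` of at most `n` flats. -/
def NFlat (M : FinMatroid N) (n : ℕ) : Prop :=
  ∀ (ι : Type) (_ : Fintype ι) (_ : DecidableEq ι) (F : ι → Finset N),
    Fintype.card ι ≤ n → (∀ i, M.IsFlat (F i)) → M.delta F ≤ 0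

/-- `M` is totally flat if `Δ(C) ≤ 0` for every finite family `C` of flats. -/
def TotallyFlat (M : FinMatroid N) : Prop :=
  ∀ (ι : Type) (_ : Fintype ι) (_ : DecidableEq ι) (F : ι → Finset N),
    (∀ i, M.IsFlat (F i)) → M.delta F ≤ 0

/-- `r(A/B) := r(A ∪ B) − r(B)`, the rank of `A` after contracting `B`. -/
def relRk (M : FinMatroid N) (A B : Finset N) : ℤ :=
  M.r (A ∪ B) - M.r B

/-- `B₀` is the pseudointersection of `A` and `B`: a flat `B₀ ⊆ B` such that for every
flat `B₁ ⊆ B`, `r(A/B₁) = r(A/B)` if and only if `B₀ ⊆ B₁`. -/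
def IsPseudoInter (M : FinMatroid N) (A B B₀ : Finset N) : Prop :=
  M.IsFlat B₀ ∧ B₀ ⊆ B ∧
    ∀ B₁, M.IsFlat B₁ → B₁ ⊆ B → (M.relRk A B₁ = M.relRk A B ↔ B₀ ⊆ B₁)

/-- `M` is pseudomodular if the pseudointersection of `A` and `B` exists for
all flats `A`, `B`. -/
def Pseudomodular (M : FinMatroid N) : Prop :=
  ∀ A B, M.IsFlat A → M.IsFlat B → ∃ B₀, M.IsPseudoInter A B B₀

/-- The closure of `A`: the smallest flat containing `A`, i.e. the intersection
of all flats containing `A`. -/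
def cl (M : FinMatroid N) (A : Finset N) : Finset N :=
  Finset.univ.filter (fun x => ∀ F : Finset N, M.IsFlat F → A ⊆ F → x ∈ F)

/-- A set `S` is cyclic if removing any element of `S` does not change its rank. -/
def Cyclic (M : FinMatroid N) (S : Finset N) : Prop :=
  ∀ n ∈ S, M.r (S.erase n) = M.r S

/-- A circuit is a minimal dependent set: it is dependent, and every proper
subset is independent. -/
def IsCircuit (M : FinMatroid N) (S : Finset N) : Prop :=
  M.r S < (S.card : ℤ) ∧ ∀ T ⊂ S, M.r T = (T.card : ℤ)

end FinMatroid

namespace FinMatroid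

variable {N : Type} [Fintype N] [DecidableEq N] (M : FinMatroid N)

lemma r_insert_le (x : N) (A : Finset N) : M.r (insert x A) ≤ M.r A + 1 := by
  have h := M.submodular {x} A
  have h1 : M.r {x} ≤ 1 := by simpa using M.r_le_card {x}
  have h2 : (0:ℤ) ≤ M.r ({x} ∩ A) := M.r_nonneg _
  rw [show ({x} : Finset N) ∪ A = insert x A from (Finset.insert_eq x A).symm] at h
  linarith

lemma insert_rank_mono {x : N} {X Y : Finset N} (hXY : X ⊆ Y)
    (h : M.r (insert x X) = M.r X) : M.r (insert x Y) = M.r Y := by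
  have hs := M.submodular (insert x X) Y
  rw [Finset.insert_union, Finset.union_eq_right.mpr hXY] at hs
  have h2 : M.r X ≤ M.r (insert x X ∩ Y) :=
    M.r_mono (Finset.subset_inter (Finset.subset_insert x X) hXY)
  have h3 : M.r Y ≤ M.r (insert x Y) := M.r_mono (Finset.subset_insert x Y)
  linarith

lemma union_rank_eq {A C : Finset N}
    (h : ∀ x ∈ C, M.r (insert x A) = M.r A) : M.r (A ∪ C) = M.r A := by
  induction C using Finset.induction_on with
  | empty => simp
  | @insert a s ha ih =>
    have h1 : M.r (A ∪ s) = M.r A := ih fun x hx => h x (Finset.mem_insert_of_mem hx)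
    have h3 : M.r (insert a (A ∪ s)) = M.r (A ∪ s) :=
      M.insert_rank_mono Finset.subset_union_left (h a (Finset.mem_insert_self a s))
    rw [Finset.union_insert, h3, h1]

lemma mem_cl {A : Finset N} {x : N} :
    x ∈ M.cl A ↔ ∀ F, M.IsFlat F → A ⊆ F → x ∈ F := by
  simp [cl]

lemma subset_cl (A : Finset N) : A ⊆ M.cl A := fun x hx =>
  M.mem_cl.mpr fun _ _ hAF => hAF hx

lemma cl_subset_flat {A F : Finset N} (hF : M.IsFlat F) (hAF : A ⊆ F) :
    M.cl A ⊆ F := fun x hx => (M.mem_cl.mp hx) F hF hAF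

lemma r_union_cl (X A : Finset N) : M.r (X ∪ M.cl A) = M.r (X ∪ A) := by
  classical
  set F : Finset N := A ∪ Finset.univ.filter (fun x => M.r (insert x A) = M.r A) with hFdef
  have hAF : A ⊆ F := Finset.subset_union_left
  have hmem : ∀ x ∈ F, M.r (insert x A) = M.r A := by
    intro x hx
    rcases Finset.mem_union.mp hx with h | h
    · rw [Finset.insert_eq_self.mpr h]
    · exact (Finset.mem_filter.mp h).2
  have hrF : M.r F = M.r A := by
    have h := M.union_rank_eq hmem
    rwa [Finset.union_eq_right.mpr hAF] at h
  have hFflat : M.IsFlat F := by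
    intro n hn
    have hnA : n ∉ A := fun hh => hn (hAF hh)
    have hne : M.r (insert n A) ≠ M.r A := by
      intro he
      exact hn (Finset.mem_union_right _ (Finset.mem_filter.mpr ⟨Finset.mem_univ _, he⟩))
    have hle : M.r A ≤ M.r (insert n A) := M.r_mono (Finset.subset_insert _ _)
    have h1 : M.r A < M.r (insert n A) := lt_of_le_of_ne hle (Ne.symm hne)
    calc M.r F = M.r A := hrF
      _ < M.r (insert n A) := h1
      _ ≤ M.r (insert n F) := M.r_mono (Finset.insert_subset_insert _ hAF)
  have hclF : M.cl A ⊆ F := M.cl_subset_flat hFflat hAF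
  have key : M.r ((X ∪ A) ∪ F) = M.r (X ∪ A) :=
    M.union_rank_eq fun x hx =>
      M.insert_rank_mono Finset.subset_union_right (hmem x hx)
  have h1 : M.r (X ∪ A) ≤ M.r (X ∪ M.cl A) :=
    M.r_mono (Finset.union_subset_union_right (M.subset_cl A))
  have h2 : M.r (X ∪ M.cl A) ≤ M.r ((X ∪ A) ∪ F) :=
    M.r_mono (Finset.union_subset
      (Finset.subset_union_left.trans Finset.subset_union_left)
      (hclF.trans Finset.subset_union_right))
  linarith

lemma r_cl (A : Finset N) : M.r (M.cl A) = M.r A := by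
  have h := M.r_union_cl ∅ A
  simpa using h

lemma cl_flat (A : Finset N) : M.IsFlat (M.cl A) := by
  intro n hn
  rw [mem_cl] at hn
  push_neg at hn
  obtain ⟨F, hF, hAF, hnF⟩ := hn
  by_contra hcon
  have hle : M.r (M.cl A) ≤ M.r (insert n (M.cl A)) := M.r_mono (Finset.subset_insert _ _)
  have heq : M.r (insert n (M.cl A)) = M.r (M.cl A) := le_antisymm (not_lt.mp hcon) hle
  have h2 := M.insert_rank_mono (M.cl_subset_flat hF hAF) heq
  exact absurd h2 (ne_of_gt (hF n hnF))

lemma subset_of_rank_union_eq {A B : Finset N} (hB : M.IsFlat B)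
    (h : M.r (A ∪ B) = M.r B) : A ⊆ B := by
  intro a ha
  by_contra hab
  have h1 := hB a hab
  have h2 : M.r (insert a B) ≤ M.r (A ∪ B) :=
    M.r_mono (Finset.insert_subset (Finset.mem_union_left _ ha) Finset.subset_union_right)
  linarith

lemma relRk_nonneg (A B : Finset N) : 0 ≤ M.relRk A B :=
  sub_nonneg.mpr (M.r_mono Finset.subset_union_right)

lemma relRk_antitone (A : Finset N) {B₁ B₂ : Finset N} (h : B₁ ⊆ B₂) :
    M.relRk A B₂ ≤ M.relRk A B₁ := by
  have hs := M.submodular (A ∪ B₁) B₂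
  rw [Finset.union_assoc, Finset.union_eq_right.mpr h] at hs
  have h2 : M.r B₁ ≤ M.r ((A ∪ B₁) ∩ B₂) :=
    M.r_mono (Finset.subset_inter Finset.subset_union_right h)
  unfold relRk
  linarith

lemma diff_antitone {A₀ A X Y : Finset N} (hA : A₀ ⊆ A) (hXY : X ⊆ Y) :
    M.r (A ∪ Y) - M.r (A₀ ∪ Y) ≤ M.r (A ∪ X) - M.r (A₀ ∪ X) := by
  have hs := M.submodular (A ∪ X) (A₀ ∪ Y)
  have h1 : (A ∪ X) ∪ (A₀ ∪ Y) = A ∪ Y := by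
    apply Finset.Subset.antisymm
    · exact Finset.union_subset
        (Finset.union_subset Finset.subset_union_left (hXY.trans Finset.subset_union_right))
        (Finset.union_subset (hA.trans Finset.subset_union_left) Finset.subset_union_right)
    · exact Finset.union_subset
        (Finset.subset_union_left.trans Finset.subset_union_left)
        (Finset.subset_union_right.trans Finset.subset_union_right)
  rw [h1] at hs
  have h2 : M.r (A₀ ∪ X) ≤ M.r ((A ∪ X) ∩ (A₀ ∪ Y)) :=
    M.r_mono (Finset.subset_inter (Finset.union_subset_union hA (Finset.Subset.refl _))
      (Finset.union_subset_union (Finset.Subset.refl _) hXY))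
  linarith

lemma exists_relRk_eq (B : Finset N) (A : Finset N) :
    ∀ (j : ℤ), 0 ≤ j → j ≤ M.relRk A B → ∃ A₀, A₀ ⊆ A ∧ M.relRk A₀ B = j := by
  induction A using Finset.induction_on with
  | empty =>
    intro j h0 hj
    have hz : M.relRk ∅ B = 0 := by simp [relRk]
    have hj0 : j = 0 := by rw [hz] at hj; omega
    exact ⟨∅, Finset.Subset.refl _, by rw [hz, hj0]⟩
  | @insert a s ha ih =>
    intro j h0 hj
    have hstep : M.relRk (insert a s) B ≤ M.relRk s B + 1 := by
      unfold relRk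
      rw [Finset.insert_union]
      have := M.r_insert_le a (s ∪ B)
      linarith
    by_cases hc : j ≤ M.relRk s B
    · obtain ⟨A₀, h1, h2⟩ := ih j h0 hc
      exact ⟨A₀, h1.trans (Finset.subset_insert a s), h2⟩
    · refine ⟨insert a s, Finset.Subset.refl _, ?_⟩
      have hmono : M.relRk s B ≤ M.relRk (insert a s) B := by
        unfold relRk
        have : s ∪ B ⊆ insert a s ∪ B :=
          Finset.union_subset_union (Finset.subset_insert a s) (Finset.Subset.refl _)
        have := M.r_mono this
        linarith
      omega

theorem aux_exists (M : FinMatroid N)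
    (hyp : ∀ A B, M.IsFlat B → M.relRk A B = 1 → ∃ B₀, M.IsPseudoInter A B B₀) :
    ∀ (k : ℕ) (A B : Finset N), M.IsFlat B → M.relRk A B = (k : ℤ) →
      ∃ B₀, M.IsPseudoInter A B B₀ := by
  intro k
  induction k using Nat.strong_induction_on with
  | _ k ih =>
  match k, ih with
  | 0, _ =>
    intro A B hB hk
    push_cast at hk
    have hr : M.r (A ∪ B) = M.r B := by unfold relRk at hk; linarith
    have hAB : A ⊆ B := M.subset_of_rank_union_eq hB hr
    refine ⟨M.cl A, M.cl_flat A, M.cl_subset_flat hB hAB, ?_⟩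
    intro B₁ hB₁ hB₁B
    rw [hk]
    constructor
    · intro h
      have hr1 : M.r (A ∪ B₁) = M.r B₁ := by unfold relRk at h; linarith
      exact M.cl_subset_flat hB₁ (M.subset_of_rank_union_eq hB₁ hr1)
    · intro h
      have hA1 : A ⊆ B₁ := (M.subset_cl A).trans h
      unfold relRk
      rw [Finset.union_eq_right.mpr hA1]
      ring
  | 1, _ =>
    intro A B hB hk
    push_cast at hk
    exact hyp A B hB hk
  | (k+2), ih =>
    intro A B hB hk
    push_cast at hk
    obtain ⟨A₀, hA₀A, hA₀⟩ := M.exists_relRk_eq B A ((k:ℤ)+1) (by positivity)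
      (by rw [hk]; linarith)
    have hHflat : M.IsFlat (M.cl (A₀ ∪ B)) := M.cl_flat _
    have hBH : B ⊆ M.cl (A₀ ∪ B) := Finset.subset_union_right.trans (M.subset_cl _)
    have hA₀H : A₀ ⊆ M.cl (A₀ ∪ B) := Finset.subset_union_left.trans (M.subset_cl _)
    have hrH : M.r (M.cl (A₀ ∪ B)) = M.r (A₀ ∪ B) := M.r_cl _
    have hunionA : A ∪ (A₀ ∪ B) = A ∪ B := by
      rw [← Finset.union_assoc, Finset.union_eq_left.mpr hA₀A]
    have hAH : M.relRk A (M.cl (A₀ ∪ B)) = 1 := by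
      unfold relRk
      rw [hrH, M.r_union_cl, hunionA]
      unfold relRk at hk hA₀
      linarith
    obtain ⟨Q, hQflat, hQH, hQiff⟩ := hyp A (M.cl (A₀ ∪ B)) hHflat hAH
    have hA'B : M.relRk (A₀ ∪ Q) B = (k:ℤ)+1 := by
      have hub : M.r ((A₀ ∪ Q) ∪ B) ≤ M.r (M.cl (A₀ ∪ B)) :=
        M.r_mono (Finset.union_subset (Finset.union_subset hA₀H hQH) hBH)
      have hlb : M.r (A₀ ∪ B) ≤ M.r ((A₀ ∪ Q) ∪ B) :=
        M.r_mono (Finset.union_subset_union_left Finset.subset_union_left)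
      unfold relRk at hA₀ ⊢
      linarith [hrH]
    obtain ⟨C', hC'flat, hC'B, hC'iff⟩ := ih (k+1) (by omega) (A₀ ∪ Q) B hB
      (by push_cast; exact hA'B)
    refine ⟨C', hC'flat, hC'B, ?_⟩
    intro B₁ hB₁ hB₁B
    rw [hk]
    have hmain := hC'iff B₁ hB₁ hB₁B
    rw [hA'B] at hmain
    rw [← hmain]
    constructor
    · intro hA1
      have h1 : (k:ℤ)+1 ≤ M.relRk A₀ B₁ := by
        have := M.relRk_antitone A₀ hB₁B
        rw [hA₀] at this
        linarith
      have h2 := M.diff_antitone hA₀A hB₁B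
      have h3 : M.relRk A₀ B₁ = (k:ℤ)+1 := by
        unfold relRk at h1 hA₀ hA1 hk ⊢
        linarith
      have hXflat := M.cl_flat (A₀ ∪ B₁)
      have hXH : M.cl (A₀ ∪ B₁) ⊆ M.cl (A₀ ∪ B) :=
        M.cl_subset_flat hHflat (Finset.union_subset hA₀H (hB₁B.trans hBH))
      have hunionA1 : A ∪ (A₀ ∪ B₁) = A ∪ B₁ := by
        rw [← Finset.union_assoc, Finset.union_eq_left.mpr hA₀A]
      have hAX : M.relRk A (M.cl (A₀ ∪ B₁)) = 1 := by
        unfold relRk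
        rw [M.r_cl, M.r_union_cl, hunionA1]
        unfold relRk at hA1 h3
        linarith
      have hQX : Q ⊆ M.cl (A₀ ∪ B₁) :=
        (hQiff _ hXflat hXH).mp (by rw [hAX, hAH])
      have hsub : (A₀ ∪ Q) ∪ B₁ ⊆ M.cl (A₀ ∪ B₁) :=
        Finset.union_subset
          (Finset.union_subset (Finset.subset_union_left.trans (M.subset_cl _)) hQX)
          (Finset.subset_union_right.trans (M.subset_cl _))
      have hub : M.r ((A₀ ∪ Q) ∪ B₁) ≤ M.r (A₀ ∪ B₁) := by
        have := M.r_mono hsub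
        rwa [M.r_cl] at this
      have hlb : M.r (A₀ ∪ B₁) ≤ M.r ((A₀ ∪ Q) ∪ B₁) :=
        M.r_mono (Finset.union_subset_union_left Finset.subset_union_left)
      unfold relRk at h3 ⊢
      linarith
    · intro hA1
      have hge : (k:ℤ)+2 ≤ M.relRk A B₁ := by
        have := M.relRk_antitone A hB₁B
        rw [hk] at this
        linarith
      have hXflat := M.cl_flat ((A₀ ∪ Q) ∪ B₁)
      have hXH : M.cl ((A₀ ∪ Q) ∪ B₁) ⊆ M.cl (A₀ ∪ B) :=
        M.cl_subset_flat hHflat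
          (Finset.union_subset (Finset.union_subset hA₀H hQH) (hB₁B.trans hBH))
      have hQX : Q ⊆ M.cl ((A₀ ∪ Q) ∪ B₁) :=
        (Finset.subset_union_right.trans Finset.subset_union_left).trans (M.subset_cl _)
      have hAX : M.relRk A (M.cl ((A₀ ∪ Q) ∪ B₁)) = 1 := by
        have := (hQiff _ hXflat hXH).mpr hQX
        rw [hAH] at this
        exact this
      have h5 : M.r (A ∪ B₁) ≤ M.r (A ∪ ((A₀ ∪ Q) ∪ B₁)) :=
        M.r_mono (Finset.union_subset_union_right Finset.subset_union_right)
      have h6 : M.r (A ∪ ((A₀ ∪ Q) ∪ B₁)) = M.r (A ∪ M.cl ((A₀ ∪ Q) ∪ B₁)) :=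
        (M.r_union_cl A ((A₀ ∪ Q) ∪ B₁)).symm
      have h8 : M.r (M.cl ((A₀ ∪ Q) ∪ B₁)) = M.r ((A₀ ∪ Q) ∪ B₁) := M.r_cl _
      unfold relRk at hA1 hge hAX ⊢
      linarith


end FinMatroid

/-- If a finite matroid `M` is not pseudomodular, then there exist a flat `B` and a
subset `A` of the ground set with `r(A/B) = 1` such that `A` has no
pseudointersection with `B`. -/
theorem not_pseudomodular_exists_relRk_one {N : Type} [Fintype N] [DecidableEq N]
    (M : FinMatroid N) (h : ¬ M.Pseudomodular) :
    ∃ (B A : Finset N), M.IsFlat B ∧ M.relRk A B = 1 ∧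
      ¬ ∃ B₀, M.IsPseudoInter A B B₀ := by
  by_contra hcon
  push_neg at hcon
  apply h
  intro A B _ hB
  have hyp : ∀ A B, M.IsFlat B → M.relRk A B = 1 → ∃ B₀, M.IsPseudoInter A B B₀ :=
    fun A' B' hB' h1 => hcon B' A' hB' h1
  exact M.aux_exists hyp (M.relRk A B).toNat A B hB
    (Int.toNat_of_nonneg (M.relRk_nonneg A B)).symm
end

section
/- Every finite matroid that is totally flat is pseudomodular. (In the paper this is stated as: every strict gammoid is pseudomodular, via the characterization of finite strict gammoids as the totally flat matroids.) -/
namespace FinMatroid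

variable {N : Type} [Fintype N] [DecidableEq N]

section Aux

variable (M : FinMatroid N)

lemma delta_fin3 (F : Fin 3 → Finset N) :
    M.delta F = M.r (F 0 ∪ (F 1 ∪ F 2)) - M.r (F 0) - M.r (F 1) - M.r (F 2)
      + M.r (F 0 ∩ F 1) + M.r (F 0 ∩ F 2) + M.r (F 1 ∩ F 2) - M.r (F 0 ∩ (F 1 ∩ F 2)) := by
  rw [delta, show (Finset.univ : Finset (Finset (Fin 3))) =
    {∅, {0}, {1}, {2}, {0,1}, {0,2}, {1,2}, {0,1,2}} from by decide]
  rw [show ({∅, {0}, {1}, {2}, {0,1}, {0,2}, {1,2}, {0,1,2}} : Finset (Finset (Fin 3)))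
      = insert ∅ (insert {0} (insert {1} (insert {2} (insert {0,1} (insert {0,2}
        (insert {1,2} ({({0,1,2} : Finset (Fin 3))} : Finset (Finset (Fin 3))))))))) from rfl]
  rw [Finset.sum_insert (by decide), Finset.sum_insert (by decide), Finset.sum_insert (by decide),
    Finset.sum_insert (by decide), Finset.sum_insert (by decide), Finset.sum_insert (by decide),
    Finset.sum_insert (by decide), Finset.sum_singleton]
  norm_num [Finset.inf_insert, Finset.sup_insert]
  rw [show ({0,2} : Finset (Fin 3)).card = 2 from rfl,
    show ({1,2} : Finset (Fin 3)).card = 2 from rfl,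
    show ({0,1,2} : Finset (Fin 3)).card = 3 from rfl,
    show (Finset.univ : Finset (Fin 3)) = {0,1,2} from by decide]
  norm_num [Finset.sup_insert, Finset.sup_singleton]
  ring

/-- The closure of `A`, described via rank. -/
def clo (A : Finset N) : Finset N :=
  Finset.univ.filter (fun x => M.r (insert x A) = M.r A)

lemma subset_clo (A : Finset N) : A ⊆ M.clo A := by
  intro x hx
  simp only [clo, Finset.mem_filter, Finset.mem_univ, true_and]
  rw [Finset.insert_eq_self.2 hx]

lemma r_union_eq_of_forall {A : Finset N} :
    ∀ {X : Finset N}, (∀ x ∈ X, M.r (insert x A) = M.r A) → M.r (A ∪ X) = M.r A := by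
  intro X
  induction X using Finset.induction_on with
  | empty => simp
  | @insert x X hxX ih =>
    intro h
    have hX : M.r (A ∪ X) = M.r A := ih fun y hy => h y (Finset.mem_insert_of_mem hy)
    have hx : M.r (insert x A) = M.r A := h x (Finset.mem_insert_self x X)
    have hsub := M.submodular (A ∪ X) (insert x A)
    have hu : (A ∪ X) ∪ insert x A = A ∪ insert x X := by
      ext y; simp [Finset.mem_union, Finset.mem_insert]; tauto
    have hi : A ⊆ (A ∪ X) ∩ insert x A := by
      intro y hy
      simp [Finset.mem_inter, Finset.mem_union, Finset.mem_insert, hy]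
    have h1 : M.r A ≤ M.r ((A ∪ X) ∩ insert x A) := M.r_mono hi
    have h2 : M.r A ≤ M.r (A ∪ insert x X) := M.r_mono Finset.subset_union_left
    rw [hu] at hsub
    omega

lemma r_clo (A : Finset N) : M.r (M.clo A) = M.r A := by
  have h : M.r (A ∪ M.clo A) = M.r A := by
    apply M.r_union_eq_of_forall
    intro x hx
    simpa [clo, Finset.mem_filter] using hx
  rwa [Finset.union_eq_right.2 (M.subset_clo A)] at h

lemma clo_isFlat (A : Finset N) : M.IsFlat (M.clo A) := by
  intro n hn
  have hne : M.r (insert n A) ≠ M.r A := by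
    simpa [clo, Finset.mem_filter] using hn
  have hge : M.r A ≤ M.r (insert n A) := M.r_mono (Finset.subset_insert _ _)
  have hlt : M.r A < M.r (insert n A) := lt_of_le_of_ne hge (Ne.symm hne)
  have h1 : M.r (insert n A) ≤ M.r (insert n (M.clo A)) :=
    M.r_mono (Finset.insert_subset_insert _ (M.subset_clo A))
  rw [M.r_clo A]
  omega

lemma clo_subset_flat {A F : Finset N} (hF : M.IsFlat F) (hAF : A ⊆ F) : M.clo A ⊆ F := by
  intro x hx
  have hx' : M.r (insert x A) = M.r A := by
    simpa [clo, Finset.mem_filter] using hx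
  by_contra hxF
  have hflat := hF x hxF
  have hsub := M.submodular (insert x A) F
  have hu : insert x A ∪ F = insert x F := by
    rw [Finset.insert_union, Finset.union_eq_right.2 hAF]
  have hi : A ⊆ insert x A ∩ F := by
    intro y hy; simp [Finset.mem_inter, Finset.mem_insert, hy, hAF hy]
  have h1 : M.r A ≤ M.r (insert x A ∩ F) := M.r_mono hi
  rw [hu] at hsub
  omega

lemma inter_isFlat {F G : Finset N} (hF : M.IsFlat F) (hG : M.IsFlat G) :
    M.IsFlat (F ∩ G) := by
  intro n hn
  rw [Finset.mem_inter] at hn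
  push_neg at hn
  rcases Decidable.em (n ∈ F) with hnF | hnF
  · -- n ∉ G
    have hnG : n ∉ G := hn hnF
    have hflat := hG n hnG
    have hsub := M.submodular (insert n (F ∩ G)) G
    have hu : insert n (F ∩ G) ∪ G = insert n G := by
      ext y; simp [Finset.mem_union, Finset.mem_insert, Finset.mem_inter]; tauto
    have hi : F ∩ G ⊆ insert n (F ∩ G) ∩ G := by
      intro y hy
      have := Finset.mem_inter.1 hy
      simp [Finset.mem_inter, Finset.mem_insert, this.1, this.2]
    have h1 : M.r (F ∩ G) ≤ M.r (insert n (F ∩ G) ∩ G) := M.r_mono hi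
    have h2 : M.r (F ∩ G) ≤ M.r (insert n (F ∩ G)) := M.r_mono (Finset.subset_insert _ _)
    rw [hu] at hsub
    omega
  · have hflat := hF n hnF
    have hsub := M.submodular (insert n (F ∩ G)) F
    have hu : insert n (F ∩ G) ∪ F = insert n F := by
      ext y; simp [Finset.mem_union, Finset.mem_insert, Finset.mem_inter]; tauto
    have hi : F ∩ G ⊆ insert n (F ∩ G) ∩ F := by
      intro y hy
      have := Finset.mem_inter.1 hy
      simp [Finset.mem_inter, Finset.mem_insert, this.1, this.2]
    have h1 : M.r (F ∩ G) ≤ M.r (insert n (F ∩ G) ∩ F) := M.r_mono hi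
    have h2 : M.r (F ∩ G) ≤ M.r (insert n (F ∩ G)) := M.r_mono (Finset.subset_insert _ _)
    rw [hu] at hsub
    omega

lemma relRk_antitone_s2 {A X Y : Finset N} (hXY : X ⊆ Y) : M.relRk A Y ≤ M.relRk A X := by
  have hsub := M.submodular (A ∪ X) Y
  have hu : (A ∪ X) ∪ Y = A ∪ Y := by
    rw [Finset.union_assoc, Finset.union_eq_right.2 hXY]
  have hi : X ⊆ (A ∪ X) ∩ Y := by
    intro y hy; simp [Finset.mem_inter, Finset.mem_union, hy, hXY hy]
  have h1 : M.r X ≤ M.r ((A ∪ X) ∩ Y) := M.r_mono hi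
  rw [hu] at hsub
  unfold relRk
  omega

lemma flat_eq_of_subset_of_r_le {X Y : Finset N} (hX : M.IsFlat X) (hXY : X ⊆ Y)
    (hr : M.r Y ≤ M.r X) : Y = X := by
  apply Finset.Subset.antisymm _ hXY
  intro n hn
  by_contra hnX
  have h1 := hX n hnX
  have h2 : M.r (insert n X) ≤ M.r Y := M.r_mono (Finset.insert_subset hn hXY)
  omega

/-- If `X ⊆ B` is a flat with `r(A/X) = r(A/B)`, then `cl(A ∪ X) ∩ B = X`. -/
lemma clo_inter_eq {A B X : Finset N} (_hB : M.IsFlat B) (hX : M.IsFlat X) (hXB : X ⊆ B)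
    (hrX : M.relRk A X = M.relRk A B) : M.clo (A ∪ X) ∩ B = X := by
  set G := M.clo (A ∪ X) with hG
  have hXG : X ⊆ G := fun y hy => M.subset_clo _ (Finset.mem_union_right _ hy)
  have hXGB : X ⊆ G ∩ B := fun y hy => Finset.mem_inter.2 ⟨hXG hy, hXB hy⟩
  -- r(A ∪ (G ∩ B)) = r(A ∪ X)
  have hle : M.r (A ∪ (G ∩ B)) ≤ M.r (A ∪ X) := by
    have h1 : A ∪ (G ∩ B) ⊆ G := by
      apply Finset.union_subset
      · exact fun y hy => M.subset_clo _ (Finset.mem_union_left _ hy)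
      · exact Finset.inter_subset_left
    calc M.r (A ∪ (G ∩ B)) ≤ M.r G := M.r_mono h1
      _ = M.r (A ∪ X) := M.r_clo _
  have hge : M.r (A ∪ X) ≤ M.r (A ∪ (G ∩ B)) :=
    M.r_mono (Finset.union_subset_union_right hXGB)
  -- r(A/(G∩B)) ≥ r(A/B) by antitonicity
  have hanti := M.relRk_antitone_s2 (A := A) (Finset.inter_subset_right (s₁ := G) (s₂ := B))
  have hrG : M.r (G ∩ B) ≤ M.r X := by
    unfold relRk at hanti hrX
    omega
  exact M.flat_eq_of_subset_of_r_le hX hXGB hrG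

/-- The key lemma: the collection of flats `X ⊆ B` with `r(A/X) = r(A/B)` is
closed under intersection. -/
lemma key (M : FinMatroid N) (h : M.TotallyFlat) {A B X Y : Finset N}
    (hB : M.IsFlat B) (hX : M.IsFlat X) (hY : M.IsFlat Y) (hXB : X ⊆ B) (hYB : Y ⊆ B)
    (hrX : M.relRk A X = M.relRk A B) (hrY : M.relRk A Y = M.relRk A B) :
    M.relRk A (X ∩ Y) = M.relRk A B := by
  set G₁ := M.clo (A ∪ X) with hG₁
  set G₂ := M.clo (A ∪ Y) with hG₂
  have hG₁B : G₁ ∩ B = X := M.clo_inter_eq hB hX hXB hrX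
  have hG₂B : G₂ ∩ B = Y := M.clo_inter_eq hB hY hYB hrY
  have hd : M.delta ![G₁, G₂, B] ≤ 0 :=
    h (Fin 3) inferInstance inferInstance ![G₁, G₂, B] (by
      intro i
      fin_cases i
      exacts [M.clo_isFlat _, M.clo_isFlat _, hB])
  rw [M.delta_fin3] at hd
  simp only [Matrix.cons_val_zero, Matrix.cons_val_one, Matrix.head_cons,
    Matrix.cons_val_two, Matrix.tail_cons] at hd
  -- rank facts
  have hr1 : M.r G₁ = M.r (A ∪ X) := M.r_clo _
  have hr2 : M.r G₂ = M.r (A ∪ Y) := M.r_clo _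
  have htriple : G₁ ∩ (G₂ ∩ B) = X ∩ Y := by
    rw [← hG₁B, ← hG₂B]
    ext y; simp only [Finset.mem_inter]; tauto
  have hsup : M.r (A ∪ B) ≤ M.r (G₁ ∪ (G₂ ∪ B)) := by
    apply M.r_mono
    apply Finset.union_subset
    · exact fun y hy => Finset.mem_union_left _
        (M.subset_clo _ (Finset.mem_union_left _ hy))
    · exact fun y hy => Finset.mem_union_right _ (Finset.mem_union_right _ hy)
  have hAXY : A ∪ (X ∩ Y) ⊆ G₁ ∩ G₂ := by
    apply Finset.union_subset
    · intro y hy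
      exact Finset.mem_inter.2 ⟨M.subset_clo _ (Finset.mem_union_left _ hy),
        M.subset_clo _ (Finset.mem_union_left _ hy)⟩
    · intro y hy
      have := Finset.mem_inter.1 hy
      exact Finset.mem_inter.2 ⟨M.subset_clo _ (Finset.mem_union_right _ this.1),
        M.subset_clo _ (Finset.mem_union_right _ this.2)⟩
  have h12 : M.r (A ∪ (X ∩ Y)) ≤ M.r (G₁ ∩ G₂) := M.r_mono hAXY
  have hanti : M.relRk A B ≤ M.relRk A (X ∩ Y) :=
    M.relRk_antitone_s2 (Finset.inter_subset_left.trans hXB)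
  rw [htriple, hG₁B, hG₂B] at hd
  unfold relRk at hrX hrY hanti ⊢
  omega

end Aux

end FinMatroid

/-- Every finite matroid that is totally flat (equivalently, every finite strict
gammoid) is pseudomodular. -/
theorem pseudomodular_of_totallyFlat {N : Type} [Fintype N] [DecidableEq N]
    (M : FinMatroid N) (h : M.TotallyFlat) : M.Pseudomodular := by
  intro A B hA hB
  classical
  set S : Finset (Finset N) :=
    Finset.univ.filter (fun X => M.IsFlat X ∧ X ⊆ B ∧ M.relRk A X = M.relRk A B) with hS
  have hBS : B ∈ S := by
    simp [hS, Finset.mem_filter, hB]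
  have hSne : S.Nonempty := ⟨B, hBS⟩
  set B₀ : Finset N := S.inf' hSne id with hB₀
  have hmem : ∀ X ∈ S, M.IsFlat X ∧ X ⊆ B ∧ M.relRk A X = M.relRk A B := by
    intro X hX
    simpa [hS, Finset.mem_filter] using hX
  have hB₀S : B₀ ∈ S := by
    apply Finset.inf'_mem
      (↑S : Set (Finset N)) _ _ _ _ (fun i hi => hi)
    intro x hx y hy
    simp only [Finset.mem_coe] at hx hy ⊢
    obtain ⟨hxf, hxb, hxr⟩ := hmem x hx
    obtain ⟨hyf, hyb, hyr⟩ := hmem y hy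
    have hinter := M.key h hB hxf hyf hxb hyb hxr hyr
    simp only [hS, Finset.mem_filter, Finset.mem_univ, true_and]
    refine ⟨M.inter_isFlat hxf hyf, Finset.inter_subset_left.trans hxb, hinter⟩
  obtain ⟨hB₀flat, hB₀B, hB₀r⟩ := hmem B₀ hB₀S
  refine ⟨B₀, hB₀flat, hB₀B, ?_⟩
  intro B₁ hB₁flat hB₁B
  constructor
  · intro hr
    have hB₁S : B₁ ∈ S := by
      simp [hS, Finset.mem_filter, hB₁flat, hB₁B, hr]
    exact Finset.inf'_le id hB₁S
  · intro hsub
    have h1 : M.relRk A B₁ ≤ M.relRk A B₀ := M.relRk_antitone_s2 hsub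
    have h2 : M.relRk A B ≤ M.relRk A B₁ := M.relRk_antitone_s2 hB₁B
    omega
end

section
/- Let C = (F_i)_{i ∈ I} be a finite family of flats of a matroid M, and suppose there are indices i ≠ j in I with F_i ⊆ F_j. Then Δ(C) = Δ(C \ {F_i}), where C \ {F_i} is the family obtained by deleting the member indexed by i. -/
/-- If a finite family of flats `C = (F_i)` has two members `F_i ⊆ F_j` with `i ≠ j`,
then `Δ(C) = Δ(C \ {F_i})`, where the member indexed by `i` has been deleted. -/
theorem delta_delete_subset {N : Type} [Fintype N] [DecidableEq N]
    (M : FinMatroid N) {ι : Type} [Fintype ι] [DecidableEq ι]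
    (F : ι → Finset N) (hF : ∀ i, M.IsFlat (F i))
    {i j : ι} (hij : i ≠ j) (hsub : F i ⊆ F j) :
    M.delta F = M.delta (fun x : {x : ι // x ≠ i} => F x.1) := by
  classical
  have key : ∀ S : Finset ι, i ∈ S → (insert j S).inf F = S.inf F := by
    intro S hi
    rw [Finset.inf_insert, inf_eq_right]
    exact le_trans (Finset.inf_le hi) hsub
  have hjmem : j ∈ Finset.univ.erase i :=
    Finset.mem_erase.mpr ⟨hij.symm, Finset.mem_univ j⟩
  have hsup : Finset.univ.sup F = (Finset.univ.erase i).sup F := by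
    refine le_antisymm (Finset.sup_le fun k _ => ?_)
      (Finset.sup_mono (Finset.erase_subset _ _))
    by_cases hk : k = i
    · subst hk
      exact le_trans hsub (Finset.le_sup hjmem)
    · exact Finset.le_sup (Finset.mem_erase.mpr ⟨hk, Finset.mem_univ k⟩)
  unfold FinMatroid.delta
  rw [← Finset.sum_filter_add_sum_filter_not Finset.univ (fun S : Finset ι => i ∈ S)]
  have h1 : ∑ S ∈ Finset.univ.filter (fun S : Finset ι => i ∈ S),
      (-1:ℤ)^S.card * M.r (if S.Nonempty then S.inf F else Finset.univ.sup F) = 0 := by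
    apply Finset.sum_involution (fun S _ => if j ∈ S then S.erase j else insert j S)
    · intro S hS
      simp only [Finset.mem_filter] at hS
      by_cases hj : j ∈ S
      · simp only [hj, if_true]
        have hiS : i ∈ S.erase j := Finset.mem_erase.mpr ⟨hij, hS.2⟩
        have hcard : S.card = (S.erase j).card + 1 := by
          rw [Finset.card_erase_of_mem hj]
          have := Finset.card_pos.mpr ⟨j, hj⟩
          omega
        have hinf : S.inf F = (S.erase j).inf F := by
          conv_lhs => rw [← Finset.insert_erase hj]
          exact key _ hiS
        rw [if_pos ⟨i, hS.2⟩, if_pos ⟨i, hiS⟩, hinf, hcard, pow_succ]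
        ring
      · simp only [hj, if_false]
        have hiS : i ∈ insert j S := Finset.mem_insert_of_mem hS.2
        have hcard : (insert j S).card = S.card + 1 := Finset.card_insert_of_notMem hj
        rw [if_pos ⟨i, hS.2⟩, if_pos ⟨i, hiS⟩, key S hS.2, hcard, pow_succ]
        ring
    · intro S hS _
      by_cases hj : j ∈ S
      · simp only [hj, if_true]
        intro h
        have := Finset.notMem_erase j S
        rw [h] at this
        exact this hj
      · simp only [hj, if_false]
        intro h
        have := Finset.mem_insert_self j S
        rw [h] at this
        exact hj this
    · intro S hS
      by_cases hj : j ∈ S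
      · simp only [hj, if_true, Finset.notMem_erase, if_false]
        exact Finset.insert_erase hj
      · simp only [hj, if_false, Finset.mem_insert_self, if_true]
        exact Finset.erase_insert hj
    · intro S hS
      simp only [Finset.mem_filter] at hS ⊢
      by_cases hj : j ∈ S
      · simp only [hj, if_true]
        exact ⟨Finset.mem_univ _, Finset.mem_erase.mpr ⟨hij, hS.2⟩⟩
      · simp only [hj, if_false]
        exact ⟨Finset.mem_univ _, Finset.mem_insert_of_mem hS.2⟩
  rw [h1, zero_add]
  have hmapsub : ∀ T : Finset {x : ι // x ≠ i},
      (T.map (Function.Embedding.subtype _)).subtype (fun x => x ≠ i) = T := by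
    intro T
    ext x
    simp only [Finset.mem_subtype, Finset.mem_map, Function.Embedding.coe_subtype]
    constructor
    · rintro ⟨y, hy, h⟩
      exact (Subtype.ext h : y = x) ▸ hy
    · intro hx
      exact ⟨x, hx, rfl⟩
  have hsubmap : ∀ S : Finset ι, i ∉ S →
      (S.subtype (fun x => x ≠ i)).map (Function.Embedding.subtype _) = S := by
    intro S hS
    rw [Finset.subtype_map]
    exact Finset.filter_true_of_mem fun x hx => fun h => hS (h ▸ hx)
  refine Finset.sum_nbij' (fun S => S.subtype (fun x => x ≠ i))
    (fun T => T.map (Function.Embedding.subtype _)) ?_ ?_ ?_ ?_ ?_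
  · intro S _; exact Finset.mem_univ _
  · intro T _
    simp only [Finset.mem_filter]
    refine ⟨Finset.mem_univ _, ?_⟩
    intro h
    rcases Finset.mem_map.mp h with ⟨x, _, hx⟩
    exact x.2 hx
  · intro S hS
    simp only [Finset.mem_filter] at hS
    exact hsubmap S hS.2
  · intro T _; exact hmapsub T
  · intro S hS
    simp only [Finset.mem_filter] at hS
    have hm := hsubmap S hS.2
    have hcard : (S.subtype (fun x => x ≠ i)).card = S.card := by
      conv_rhs => rw [← hm]
      rw [Finset.card_map]
    have hne : S.Nonempty ↔ (S.subtype (fun x => x ≠ i)).Nonempty := by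
      rw [← Finset.card_pos, ← Finset.card_pos, hcard]
    have hinf : S.inf F = (S.subtype (fun x => x ≠ i)).inf (fun x => F x.1) := by
      conv_lhs => rw [← hm]
      rw [Finset.inf_map]
      rfl
    have hsup2 : Finset.univ.sup F
        = (Finset.univ : Finset {x : ι // x ≠ i}).sup (fun x => F x.1) := by
      have h2 : ((Finset.univ : Finset {x : ι // x ≠ i}).map
          (Function.Embedding.subtype _)) = Finset.univ.erase i := by
        ext x
        simp [Finset.mem_erase, eq_comm]
      rw [hsup, ← h2, Finset.sup_map]
      rfl
    rw [hcard]
    congr 1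
    by_cases hS2 : S.Nonempty
    · rw [if_pos hS2, if_pos (hne.mp hS2), hinf]
    · rw [if_neg hS2, if_neg (fun h => hS2 (hne.mpr h)), hsup2]
end

section
/- Let C be a finite family of flats of a matroid M. Then there exists a finite family C' of flats of M with |C'| = |C|, Δ(C') ≥ Δ(C), and every member of C' a cyclic flat of M. -/
namespace FinMatroid
variable {N : Type} [Fintype N] [DecidableEq N] (M : FinMatroid N)

lemma r_le_erase_add_one {A : Finset N} {e : N} (he : e ∈ A) :
    M.r A ≤ M.r (A.erase e) + 1 := by
  have h := M.submodular (A.erase e) {e}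
  have h1 : A.erase e ∪ {e} = A := by
    ext x
    simp only [Finset.mem_union, Finset.mem_erase, Finset.mem_singleton]
    constructor
    · rintro (⟨_, hx⟩ | rfl)
      · exact hx
      · exact he
    · intro hx
      by_cases hxe : x = e
      · exact Or.inr hxe
      · exact Or.inl ⟨hxe, hx⟩
  have h2 : (0 : ℤ) ≤ M.r (A.erase e ∩ {e}) := M.r_nonneg _
  have h3 : M.r {e} ≤ 1 := by simpa using M.r_le_card {e}
  rw [h1] at h
  linarith

/-- A coloop of a set passes to subsets containing it. -/
lemma coloop_subset {A B : Finset N} {e : N} (he : e ∈ B) (hBA : B ⊆ A)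
    (hA : M.r (A.erase e) + 1 = M.r A) :
    M.r (B.erase e) + 1 = M.r B := by
  have h := M.submodular B (A.erase e)
  have h1 : B ∪ A.erase e = A := by
    ext x
    simp only [Finset.mem_union, Finset.mem_erase]
    constructor
    · rintro (hx | ⟨_, hx⟩)
      · exact hBA hx
      · exact hx
    · intro hx
      by_cases hxe : x = e
      · exact Or.inl (hxe ▸ he)
      · exact Or.inr ⟨hxe, hx⟩
  have h2 : B ∩ A.erase e = B.erase e := by
    ext x
    simp only [Finset.mem_inter, Finset.mem_erase]
    constructor
    · rintro ⟨hx, hxe, _⟩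
      exact ⟨hxe, hx⟩
    · rintro ⟨hxe, hx⟩
      exact ⟨hx, hxe, hBA hx⟩
  rw [h1, h2] at h
  have h4 := M.r_le_erase_add_one he
  linarith

lemma flat_erase_coloop {A : Finset N} {e : N} (hA : M.IsFlat A) (he : e ∈ A)
    (hc : M.r (A.erase e) + 1 = M.r A) : M.IsFlat (A.erase e) := by
  intro n hn
  by_cases hne : n = e
  · subst hne
    rw [Finset.insert_erase he]
    linarith
  · have hnA : n ∉ A := by
      intro hnA
      exact hn (Finset.mem_erase.2 ⟨hne, hnA⟩)
    have h := M.submodular A (insert n (A.erase e))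
    have h1 : A ∪ insert n (A.erase e) = insert n A := by
      ext x
      simp only [Finset.mem_union, Finset.mem_insert, Finset.mem_erase]
      tauto
    have h2 : A ∩ insert n (A.erase e) = A.erase e := by
      ext x
      simp only [Finset.mem_inter, Finset.mem_insert, Finset.mem_erase]
      constructor
      · rintro ⟨hx, rfl | ⟨hxe, _⟩⟩
        · exact absurd hx hnA
        · exact ⟨hxe, hx⟩
      · rintro ⟨hxe, hx⟩
        exact ⟨hx, Or.inr ⟨hxe, hx⟩⟩
    rw [h1, h2] at h
    have h3 := hA n hnA
    linarith

end FinMatroid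

namespace FinMatroid
variable {N : Type} [Fintype N] [DecidableEq N] (M : FinMatroid N)

lemma r_insert_le_add_one (B : Finset N) (e : N) :
    M.r (insert e B) ≤ M.r B + 1 := by
  by_cases he : e ∈ B
  · rw [Finset.insert_eq_self.2 he]; linarith [M.r_nonneg B]
  · have := M.r_le_erase_add_one (A := insert e B) (e := e) (Finset.mem_insert_self e B)
    rwa [Finset.erase_insert he] at this

lemma delta_le_update {ι : Type} [Fintype ι] [DecidableEq ι] (F : ι → Finset N)
    (i : ι) (e : N) (he : e ∈ F i) (hc : M.r ((F i).erase e) + 1 = M.r (F i)) :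
    M.delta F ≤ M.delta (Function.update F i ((F i).erase e)) := by
  classical
  set G := Function.update F i ((F i).erase e) with hGdef
  have hGi : G i = (F i).erase e := Function.update_self i _ F
  have hGj : ∀ j, j ≠ i → G j = F j := fun j hj => Function.update_of_ne hj _ F
  have hGsub : ∀ j, G j ⊆ F j := by
    intro j
    by_cases hj : j = i
    · subst hj; rw [hGi]; exact Finset.erase_subset e (F j)
    · rw [hGj j hj]
  have mem_inf : ∀ (H : ι → Finset N) (S : Finset ι) (hS : S.Nonempty) (x : N),
      (x ∈ S.inf H ↔ ∀ j ∈ S, x ∈ H j) := by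
    intro H S hS x
    rw [← Finset.inf'_eq_inf hS, Finset.mem_inf']
  set T : Finset ι := Finset.univ.filter (fun j => e ∈ F j) with hTdef
  have hiT : i ∈ T := by simp [hTdef, he]
  set u : ℤ := M.r (Finset.univ.sup G) - M.r (Finset.univ.sup F) with hu
  -- sup facts
  have hsup_sub : Finset.univ.sup F ⊆ insert e (Finset.univ.sup G) := by
    intro x hx
    rw [Finset.mem_sup] at hx
    obtain ⟨j, hj, hxj⟩ := hx
    by_cases hxe : x = e
    · exact Finset.mem_insert.2 (Or.inl hxe)
    · refine Finset.mem_insert.2 (Or.inr ?_)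
      rw [Finset.mem_sup]
      refine ⟨j, hj, ?_⟩
      by_cases hji : j = i
      · subst hji; rw [hGi]; exact Finset.mem_erase.2 ⟨hxe, hxj⟩
      · rw [hGj j hji]; exact hxj
  have hu_ge : -1 ≤ u := by
    have h1 : M.r (Finset.univ.sup F) ≤ M.r (insert e (Finset.univ.sup G)) :=
      M.r_mono hsup_sub
    have h2 := M.r_insert_le_add_one (Finset.univ.sup G) e
    rw [hu]; linarith
  have hu_eq : T.erase i ≠ ∅ → u = 0 := by
    intro hT
    obtain ⟨j0, hj0⟩ := Finset.nonempty_iff_ne_empty.2 hT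
    rw [Finset.mem_erase] at hj0
    obtain ⟨hj0i, hj0T⟩ := hj0
    have hej0 : e ∈ F j0 := by
      rw [hTdef] at hj0T
      exact (Finset.mem_filter.1 hj0T).2
    have hsup : Finset.univ.sup G = Finset.univ.sup F := by
      apply Finset.Subset.antisymm
      · intro x hx
        rw [Finset.mem_sup] at hx ⊢
        obtain ⟨j, hj, hxj⟩ := hx
        exact ⟨j, hj, hGsub j hxj⟩
      · intro x hx
        rw [Finset.mem_sup] at hx ⊢
        obtain ⟨j, hj, hxj⟩ := hx
        by_cases hxe : x = e
        · subst hxe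
          refine ⟨j0, Finset.mem_univ _, ?_⟩
          rw [hGj j0 hj0i]
          exact hej0
        · refine ⟨j, hj, ?_⟩
          by_cases hji : j = i
          · subst hji; rw [hGi]; exact Finset.mem_erase.2 ⟨hxe, hxj⟩
          · rw [hGj j hji]; exact hxj
    rw [hu, hsup]; ring
  -- pointwise difference
  have key : ∀ S : Finset ι,
      (-1:ℤ)^S.card * M.r (if S.Nonempty then S.inf G else Finset.univ.sup G)
      - (-1:ℤ)^S.card * M.r (if S.Nonempty then S.inf F else Finset.univ.sup F)
      = (if S = ∅ then u else 0)
        + (if i ∈ S ∧ S ⊆ T then (-1:ℤ)^(S.card+1) else 0) := by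
    intro S
    by_cases hS : S = ∅
    · subst hS
      simp [hu]
    · have hSne : S.Nonempty := Finset.nonempty_iff_ne_empty.2 hS
      rw [if_pos hSne, if_pos hSne, if_neg hS]
      by_cases hiS : i ∈ S
      · have hinfG : S.inf G = (S.inf F).erase e := by
          ext x
          rw [mem_inf G S hSne, Finset.mem_erase, mem_inf F S hSne]
          constructor
          · intro h
            have hxe : x ≠ e := by
              have := h i hiS
              rw [hGi, Finset.mem_erase] at this
              exact this.1
            exact ⟨hxe, fun j hj => hGsub j (h j hj)⟩
          · rintro ⟨hxe, h⟩ j hj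
            by_cases hji : j = i
            · subst hji; rw [hGi]; exact Finset.mem_erase.2 ⟨hxe, h j hj⟩
            · rw [hGj j hji]; exact h j hj
        have hST : S ⊆ T ↔ e ∈ S.inf F := by
          rw [mem_inf F S hSne]
          constructor
          · intro h j hj
            have := h hj
            rw [hTdef, Finset.mem_filter] at this
            exact this.2
          · intro h j hj
            rw [hTdef, Finset.mem_filter]
            exact ⟨Finset.mem_univ _, h j hj⟩
        by_cases heS : e ∈ S.inf F
        · have hsubFi : S.inf F ⊆ F i := Finset.inf_le hiS
          have hr := M.coloop_subset heS hsubFi hc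
          rw [hinfG, if_pos ⟨hiS, hST.2 heS⟩]
          have hre : M.r ((S.inf F).erase e) = M.r (S.inf F) - 1 := by linarith
          rw [pow_succ, hre]
          ring
        · rw [hinfG, Finset.erase_eq_of_notMem heS,
            if_neg (fun h => heS (hST.1 h.2))]
          ring
      · have hinfG : S.inf G = S.inf F :=
          Finset.inf_congr rfl (fun j hj => hGj j (fun h => hiS (h ▸ hj)))
        rw [hinfG, if_neg (fun h => hiS h.1)]
        ring
  -- sum it
  have hdiff : M.delta G - M.delta F =
      u + ∑ S : Finset ι, (if i ∈ S ∧ S ⊆ T then (-1:ℤ)^(S.card+1) else 0) := by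
    rw [delta, delta, ← Finset.sum_sub_distrib]
    rw [Finset.sum_congr rfl (fun S _ => key S)]
    rw [Finset.sum_add_distrib]
    congr 1
    rw [Finset.sum_ite_eq' Finset.univ (∅ : Finset ι) (fun _ => u)]
    simp
  have hfilter : Finset.univ.filter (fun S : Finset ι => i ∈ S ∧ S ⊆ T)
      = T.powerset \ (T.erase i).powerset := by
    ext S
    simp only [Finset.mem_filter, Finset.mem_univ, true_and, Finset.mem_sdiff,
      Finset.mem_powerset]
    constructor
    · rintro ⟨hiS, hST⟩
      refine ⟨hST, fun h => ?_⟩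
      have := h hiS
      exact (Finset.mem_erase.1 this).1 rfl
    · rintro ⟨hST, h⟩
      refine ⟨?_, hST⟩
      by_contra hiS
      exact h (fun x hx => Finset.mem_erase.2 ⟨fun hxi => hiS (hxi ▸ hx), hST hx⟩)
  have hsum2 : ∑ S : Finset ι, (if i ∈ S ∧ S ⊆ T then (-1:ℤ)^(S.card+1) else 0)
      = if T.erase i = ∅ then 1 else 0 := by
    rw [← Finset.sum_filter, hfilter,
      Finset.sum_sdiff_eq_sub (Finset.powerset_mono.2 (Finset.erase_subset i T))]
    have h1 : ∀ (X : Finset ι), ∑ S ∈ X.powerset, (-1:ℤ)^(S.card+1)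
        = -(if X = ∅ then 1 else 0) := by
      intro X
      rw [← Finset.sum_powerset_neg_one_pow_card (x := X), ← Finset.sum_neg_distrib]
      exact Finset.sum_congr rfl (fun S _ => by rw [pow_succ]; ring)
    rw [h1, h1, if_neg (Finset.nonempty_iff_ne_empty.1 ⟨i, hiT⟩)]
    ring_nf
  by_cases hT : T.erase i = ∅
  · have : M.delta G - M.delta F = u + 1 := by rw [hdiff, hsum2, if_pos hT]
    linarith
  · have : M.delta G - M.delta F = u := by rw [hdiff, hsum2, if_neg hT]; ring
    linarith [hu_eq hT]

end FinMatroid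

namespace FinMatroid
variable {N : Type} [Fintype N] [DecidableEq N] (M : FinMatroid N)

lemma exists_cyclic_aux (n : ℕ) :
    ∀ {ι : Type} [Fintype ι] [DecidableEq ι] (F : ι → Finset N),
      (∑ i, (F i).card) ≤ n → (∀ i, M.IsFlat (F i)) →
      ∃ F' : ι → Finset N, (∀ i, M.IsFlat (F' i) ∧ M.Cyclic (F' i)) ∧
        M.delta F ≤ M.delta F' := by
  induction n with
  | zero =>
    intro ι _ _ F hcard hF
    refine ⟨F, fun i => ⟨hF i, ?_⟩, le_refl _⟩
    intro x hx
    have h0 : (F i).card = 0 := by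
      have h1 : ∑ j, (F j).card = 0 := Nat.le_zero.1 hcard
      have := Finset.sum_eq_zero_iff.1 h1 i (Finset.mem_univ i)
      exact this
    rw [Finset.card_eq_zero] at h0
    rw [h0] at hx
    exact absurd hx (Finset.notMem_empty x)
  | succ n ih =>
    intro ι _ _ F hcard hF
    by_cases hcyc : ∀ i, M.Cyclic (F i)
    · exact ⟨F, fun i => ⟨hF i, hcyc i⟩, le_refl _⟩
    · push_neg at hcyc
      obtain ⟨i, hi⟩ := hcyc
      rw [Cyclic] at hi
      push_neg at hi
      obtain ⟨e, he, hne⟩ := hi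
      have hle := M.r_le_erase_add_one he
      have hmono := M.r_mono (Finset.erase_subset e (F i))
      have hc : M.r ((F i).erase e) + 1 = M.r (F i) := by omega
      set G := Function.update F i ((F i).erase e) with hGdef
      have hGi : G i = (F i).erase e := Function.update_self i _ F
      have hGj : ∀ j, j ≠ i → G j = F j := fun j hj => Function.update_of_ne hj _ F
      have hGflat : ∀ j, M.IsFlat (G j) := by
        intro j
        by_cases hj : j = i
        · subst hj
          rw [hGi]
          exact M.flat_erase_coloop (hF j) he hc
        · rw [hGj j hj]
          exact hF j
      have hcards : (fun j => (G j).card)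
          = Function.update (fun j => (F j).card) i (((F i).erase e).card) := by
        funext j
        by_cases hj : j = i
        · subst hj; rw [hGi, Function.update_self]
        · rw [hGj j hj, Function.update_of_ne hj]
      have hcardG : (∑ j, (G j).card) ≤ n := by
        have h1 : ∑ j, (G j).card
            = ((F i).erase e).card + ∑ j ∈ Finset.univ \ {i}, (F j).card := by
          have e1 : ∑ j, (G j).card = ∑ j, Function.update
              (fun j => (F j).card) i (((F i).erase e).card) j :=
            Finset.sum_congr rfl (fun j _ => congrFun hcards j)
          rw [e1]
          exact Finset.sum_update_of_mem (Finset.mem_univ i)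
            (fun j => (F j).card) (((F i).erase e).card)
        have h2 : (F i).card + ∑ j ∈ Finset.univ \ {i}, (F j).card
            = ∑ j, (F j).card := by
          rw [← Finset.erase_eq]
          exact Finset.add_sum_erase Finset.univ (fun j => (F j).card) (Finset.mem_univ i)
        have h3 : ((F i).erase e).card = (F i).card - 1 :=
          Finset.card_erase_of_mem he
        have h4 : 1 ≤ (F i).card := Finset.card_pos.2 ⟨e, he⟩
        omega
      obtain ⟨F', hF', hle'⟩ := ih G hcardG hGflat
      exact ⟨F', hF', le_trans (M.delta_le_update F i e he hc) hle'⟩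

end FinMatroid

/-- For any finite family `C` of flats of a matroid `M`, there is a family `C'` of the
same cardinality, with `Δ(C') ≥ Δ(C)`, all of whose members are cyclic flats. -/
theorem delta_le_delta_cyclic {N : Type} [Fintype N] [DecidableEq N]
    (M : FinMatroid N) {ι : Type} [Fintype ι] [DecidableEq ι]
    (F : ι → Finset N) (hF : ∀ i, M.IsFlat (F i)) :
    ∃ F' : ι → Finset N, (∀ i, M.IsFlat (F' i) ∧ M.Cyclic (F' i)) ∧
      M.delta F ≤ M.delta F' := by
  exact M.exists_cyclic_aux (∑ i, (F i).card) F (le_refl _) hF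
end

section
/- For every integer n ≥ 2 there exists a finite matroid M with flatness degree exactly n; that is, M is n-flat, but there exists a family C of at most n+1 flats of M with Δ(C) > 0. -/
set_option maxRecDepth 4000
set_option linter.unusedSectionVars false

namespace FinMatroid

variable {N : Type} [Fintype N] [DecidableEq N]

/-- Set-indexed version of `delta`. -/
def deltaSet (M : FinMatroid N) (C : Finset (Finset N)) : ℤ :=
  ∑ T ∈ C.powerset, (-1 : ℤ) ^ T.card *
    M.r (if T.Nonempty then T.inf id else C.sup id)

lemma r_empty (M : FinMatroid N) : M.r ∅ = 0 :=
  le_antisymm (by simpa using M.r_le_card ∅) (M.r_nonneg ∅)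

lemma delta_eq_deltaSet (M : FinMatroid N) {ι : Type} [Fintype ι] [DecidableEq ι]
    (F : ι → Finset N) (hF : Function.Injective F) :
    M.delta F = M.deltaSet (Finset.univ.image F) := by
  refine Finset.sum_bij' (fun S _ => S.image F)
    (fun T _ => Finset.univ.filter (fun i => F i ∈ T)) ?_ ?_ ?_ ?_ ?_
  · intro S _
    rw [Finset.mem_powerset]
    exact Finset.image_subset_image (Finset.subset_univ S)
  · intro T _
    exact Finset.mem_univ _
  · intro S _
    ext i
    simp [hF.eq_iff]
  · intro T hT
    rw [Finset.mem_powerset] at hT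
    ext x
    simp only [Finset.mem_image, Finset.mem_filter, Finset.mem_univ, true_and]
    constructor
    · rintro ⟨i, hi, rfl⟩; exact hi
    · intro hx
      obtain ⟨i, _, rfl⟩ := Finset.mem_image.mp (hT hx)
      exact ⟨i, hx, rfl⟩
  · intro S _
    rw [Finset.card_image_of_injective _ hF, Finset.sup_image, Finset.inf_image]
    have : (S.image F).Nonempty ↔ S.Nonempty := Finset.image_nonempty
    by_cases hS : S.Nonempty
    · rw [if_pos hS, if_pos (this.mpr hS)]
      rfl
    · rw [if_neg hS, if_neg (fun hh => hS (this.mp hh))]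
      rfl

lemma inf_insert_of_dup {ι : Type} [DecidableEq ι] (F : ι → Finset N) {i0 i1 : ι}
    (heq : F i0 = F i1) {T : Finset ι} (hT : i1 ∈ T) :
    (insert i0 T).inf F = T.inf F := by
  rw [Finset.inf_insert]
  exact inf_eq_right.mpr (le_of_le_of_eq (Finset.inf_le hT) heq.symm)

lemma delta_dedup (M : FinMatroid N) {ι : Type} [Fintype ι] [DecidableEq ι]
    (F : ι → Finset N) {i0 i1 : ι} (hne : i0 ≠ i1) (heq : F i0 = F i1) :
    M.delta F = M.delta (fun i : {i : ι // i ≠ i1} => F i.val) := by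
  classical
  unfold delta
  rw [← Finset.sum_filter_add_sum_filter_not Finset.univ (fun S => i1 ∈ S)]
  have h1 : ∑ S ∈ Finset.univ.filter (fun S : Finset ι => i1 ∈ S),
      (-1 : ℤ) ^ S.card * M.r (if S.Nonempty then S.inf F else Finset.univ.sup F) = 0 := by
    refine Finset.sum_involution
      (g := fun S _ => if i0 ∈ S then S.erase i0 else insert i0 S) ?_ ?_ ?_ ?_
    · intro S hS
      beta_reduce
      rw [Finset.mem_filter] at hS
      have hi1S : i1 ∈ S := hS.2
      by_cases h0 : i0 ∈ S
      · rw [if_pos h0]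
        have hi1e : i1 ∈ S.erase i0 := Finset.mem_erase.mpr ⟨Ne.symm hne, hi1S⟩
        have hcard : S.card = (S.erase i0).card + 1 := by
          rw [Finset.card_erase_of_mem h0]
          have : 1 ≤ S.card := Finset.card_pos.mpr ⟨i0, h0⟩
          omega
        have hinf : S.inf F = (S.erase i0).inf F := by
          conv_lhs => rw [← Finset.insert_erase h0]
          exact inf_insert_of_dup F heq hi1e
        rw [if_pos ⟨i1, hi1S⟩, if_pos ⟨i1, hi1e⟩, hinf, hcard, pow_succ]
        ring
      · rw [if_neg h0]
        have hcard : (insert i0 S).card = S.card + 1 := Finset.card_insert_of_notMem h0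
        have hinf : (insert i0 S).inf F = S.inf F := inf_insert_of_dup F heq hi1S
        rw [if_pos ⟨i1, hi1S⟩, if_pos ⟨i1, Finset.mem_insert_of_mem hi1S⟩, hinf, hcard, pow_succ]
        ring
    · intro S hS _
      beta_reduce
      by_cases h0 : i0 ∈ S
      · rw [if_pos h0]
        intro h
        exact Finset.notMem_erase i0 S (by rw [h]; exact h0)
      · rw [if_neg h0]
        intro h
        exact h0 (by rw [← h]; exact Finset.mem_insert_self i0 S)
    · intro S hS
      beta_reduce
      rw [Finset.mem_filter] at hS ⊢
      refine ⟨Finset.mem_univ _, ?_⟩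
      by_cases h0 : i0 ∈ S
      · rw [if_pos h0]
        exact Finset.mem_erase.mpr ⟨Ne.symm hne, hS.2⟩
      · rw [if_neg h0]
        exact Finset.mem_insert_of_mem hS.2
    · intro S hS
      beta_reduce
      by_cases h0 : i0 ∈ S
      · rw [if_pos h0, if_neg (Finset.notMem_erase i0 S), Finset.insert_erase h0]
      · rw [if_neg h0, if_pos (Finset.mem_insert_self i0 S), Finset.erase_insert h0]
  rw [h1, zero_add]
  have hsup : Finset.univ.sup F = (Finset.univ : Finset {i : ι // i ≠ i1}).sup
      (fun i => F i.val) := by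
    apply le_antisymm
    · apply Finset.sup_le
      intro i _
      by_cases hi : i = i1
      · have hFi : F i = F i0 := by rw [hi, ← heq]
        rw [hFi]
        exact Finset.le_sup (f := fun i : {i : ι // i ≠ i1} => F i.val)
          (Finset.mem_univ (⟨i0, hne⟩ : {i : ι // i ≠ i1}))
      · exact Finset.le_sup (f := fun i : {i : ι // i ≠ i1} => F i.val)
          (Finset.mem_univ (⟨i, hi⟩ : {i : ι // i ≠ i1}))
    · apply Finset.sup_le
      intro i _
      exact Finset.le_sup (Finset.mem_univ i.val)
  refine Finset.sum_bij' (fun S _ => S.subtype (fun i => i ≠ i1))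
    (fun T _ => T.map (Function.Embedding.subtype _)) ?_ ?_ ?_ ?_ ?_
  · intro S _; exact Finset.mem_univ _
  · intro T _
    rw [Finset.mem_filter]
    refine ⟨Finset.mem_univ _, fun hmem => ?_⟩
    obtain ⟨⟨i, hi⟩, _, h⟩ := Finset.mem_map.mp hmem
    exact hi (by simpa using h)
  · intro S hS
    rw [Finset.mem_filter] at hS
    ext i
    simp only [Finset.mem_map, Finset.mem_subtype, Function.Embedding.coe_subtype]
    constructor
    · rintro ⟨⟨j, hj⟩, hjS, rfl⟩; exact hjS
    · intro hi
      have : i ≠ i1 := fun h => hS.2 (h ▸ hi)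
      exact ⟨⟨i, this⟩, hi, rfl⟩
  · intro T _
    ext ⟨i, hi⟩
    simp only [Finset.mem_subtype, Finset.mem_map, Function.Embedding.coe_subtype]
    constructor
    · rintro ⟨⟨j, hj⟩, ha, h⟩
      have : j = i := h
      subst this
      exact ha
    · intro h
      exact ⟨⟨i, hi⟩, h, rfl⟩
  · intro S hS
    rw [Finset.mem_filter] at hS
    have hcard : (S.subtype (fun i => i ≠ i1)).card = S.card := by
      rw [Finset.card_subtype]
      congr 1
      apply Finset.filter_true_of_mem
      intro i hi
      exact fun h => hS.2 (h ▸ hi)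
    rw [hcard, ← hsup]
    have hinf : (S.subtype (fun i => i ≠ i1)).inf (fun i => F i.val) = S.inf F := by
      apply le_antisymm
      · apply Finset.le_inf
        intro i hiS
        have hi' : i ≠ i1 := fun h => hS.2 (h ▸ hiS)
        have hmm : (⟨i, hi'⟩ : {j : ι // j ≠ i1}) ∈ S.subtype (fun j => j ≠ i1) :=
          Finset.mem_subtype.mpr hiS
        exact Finset.inf_le hmm
      · apply Finset.le_inf
        rintro ⟨i, hi⟩ hmem
        exact Finset.inf_le (Finset.mem_subtype.mp hmem)
    have hnon : (S.subtype (fun i => i ≠ i1)).Nonempty ↔ S.Nonempty := by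
      constructor
      · rintro ⟨⟨i, hi⟩, hmem⟩
        exact ⟨i, (Finset.mem_subtype.mp hmem)⟩
      · rintro ⟨i, hiS⟩
        have hi' : i ≠ i1 := fun h => hS.2 (h ▸ hiS)
        exact ⟨⟨i, hi'⟩, Finset.mem_subtype.mpr hiS⟩
    by_cases hSn : S.Nonempty
    · rw [if_pos hSn, if_pos (hnon.mpr hSn), hinf]
    · rw [if_neg hSn, if_neg (fun hh => hSn (hnon.mp hh))]


lemma nflat_of_deltaSet (M : FinMatroid N) (n : ℕ)
    (h : ∀ C : Finset (Finset N), (∀ F ∈ C, M.IsFlat F) → C.card ≤ n → M.deltaSet C ≤ 0) :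
    M.NFlat n := by
  have key : ∀ (m : ℕ) (ι : Type) (i1 : Fintype ι) (i2 : DecidableEq ι) (F : ι → Finset N),
      Fintype.card ι ≤ m → Fintype.card ι ≤ n → (∀ i, M.IsFlat (F i)) → M.delta F ≤ 0 := by
    intro m
    induction m with
    | zero =>
      intro ι i1 i2 F hc hn hflat
      have hempty : IsEmpty ι := Fintype.card_eq_zero_iff.mp (le_antisymm hc (Nat.zero_le _))
      have hinj : Function.Injective F := fun a => (hempty.false a).elim
      rw [M.delta_eq_deltaSet F hinj]
      apply h
      · intro G hG
        obtain ⟨i, _, rfl⟩ := Finset.mem_image.mp hG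
        exact hflat i
      · calc (Finset.univ.image F).card ≤ (Finset.univ : Finset ι).card :=
            Finset.card_image_le
          _ = Fintype.card ι := rfl
          _ ≤ n := hn
    | succ m ih =>
      intro ι i1 i2 F hc hn hflat
      by_cases hinj : Function.Injective F
      · rw [M.delta_eq_deltaSet F hinj]
        apply h
        · intro G hG
          obtain ⟨i, _, rfl⟩ := Finset.mem_image.mp hG
          exact hflat i
        · calc (Finset.univ.image F).card ≤ (Finset.univ : Finset ι).card :=
              Finset.card_image_le
            _ = Fintype.card ι := rfl
            _ ≤ n := hn
      · rw [Function.not_injective_iff] at hinj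
        obtain ⟨a, b, heq, hne⟩ := hinj
        rw [M.delta_dedup F hne heq]
        have hcard : Fintype.card {i : ι // i ≠ b} = Fintype.card ι - 1 := by
          have h1 : Fintype.card {i : ι // i = b} = 1 :=
            Fintype.card_eq_one_iff.mpr ⟨⟨b, rfl⟩, by rintro ⟨x, rfl⟩; rfl⟩
          have h2 := Fintype.card_subtype_compl (fun i : ι => i = b)
          rw [h1] at h2
          exact h2
        have hpos : 1 ≤ Fintype.card ι := by
          have : a ∈ (Finset.univ : Finset ι) := Finset.mem_univ a
          have := Finset.card_pos.mpr ⟨a, this⟩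
          exact this
        apply ih
        · omega
        · omega
        · intro i
          exact hflat i.val
  intro ι i1 i2 F hcard hflat
  exact key (Fintype.card ι) ι i1 i2 F le_rfl hcard hflat

lemma deltaSet_empty (M : FinMatroid N) : M.deltaSet ∅ = 0 := by
  simp [deltaSet, M.r_empty]

lemma deltaSet_singleton (M : FinMatroid N) (A : Finset N) : M.deltaSet {A} = 0 := by
  have hps : ({A} : Finset (Finset N)).powerset = {∅, {A}} := by
    ext T; simp [Finset.subset_singleton_iff]
  rw [deltaSet, hps, Finset.sum_insert (by simp [(Finset.singleton_ne_empty A).symm, Ne])]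
  simp

lemma deltaSet_pair (M : FinMatroid N) {A B : Finset N} (hne : A ≠ B) :
    M.deltaSet {A, B} = M.r (A ∪ B) + M.r (A ∩ B) - M.r A - M.r B := by
  have hAB : A ∉ ({B} : Finset (Finset N)) := by simpa using hne
  have hps : ({B} : Finset (Finset N)).powerset = {∅, {B}} := by
    ext T; simp [Finset.subset_singleton_iff]
  rw [deltaSet, Finset.sum_powerset_insert hAB, hps]
  have hne0 : (∅ : Finset (Finset N)) ∉ ({ ({B} : Finset (Finset N)) } : Finset (Finset (Finset N))) := by
    simp only [Finset.mem_singleton]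
    exact fun h => (Finset.singleton_ne_empty B) h.symm
  rw [Finset.sum_insert hne0, Finset.sum_insert hne0]
  simp only [Finset.sum_singleton]
  have e1 : (insert A ({B} : Finset (Finset N))).sup id = A ∪ B := by
    rw [Finset.sup_insert, Finset.sup_singleton]
    rfl
  have e2 : (insert A ({B} : Finset (Finset N))).inf id = A ∩ B := by
    rw [Finset.inf_insert, Finset.inf_singleton]
    rfl
  have e3 : (insert A (∅ : Finset (Finset N))) = {A} := rfl
  rw [e3]
  simp only [Finset.card_empty, Finset.card_singleton, e1, e2]
  rw [if_neg (by simp), if_pos (by simp), if_pos (by simp), if_pos (by simp)]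
  have c2 : (insert A ({B} : Finset (Finset N))).card = 2 := by
    rw [Finset.card_insert_of_notMem hAB, Finset.card_singleton]
  rw [c2]
  simp [Finset.inf_singleton, Finset.sup_singleton]
  ring

lemma deltaSet_le_of_card_le_two (M : FinMatroid N) (C : Finset (Finset N))
    (h : C.card ≤ 2) : M.deltaSet C ≤ 0 := by
  interval_cases hc : C.card
  · rw [Finset.card_eq_zero.mp hc, deltaSet_empty]
  · obtain ⟨A, rfl⟩ := Finset.card_eq_one.mp hc
    rw [deltaSet_singleton]
  · obtain ⟨A, B, hne, rfl⟩ := Finset.card_eq_two.mp hc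
    rw [deltaSet_pair M hne]
    have := M.submodular A B
    omega


lemma deltaSet_eq_zero_of_top (M : FinMatroid N) (C : Finset (Finset N)) (A : Finset N)
    (hA : A ∈ C) (hmax : ∀ B ∈ C, B ⊆ A) : M.deltaSet C = 0 := by
  have hsup : C.sup id = A := by
    apply le_antisymm
    · exact Finset.sup_le (fun B hB => hmax B hB)
    · exact Finset.le_sup (f := id) hA
  unfold deltaSet
  refine Finset.sum_involution
    (g := fun T _ => if A ∈ T then T.erase A else insert A T) ?_ ?_ ?_ ?_
  · intro T hT
    beta_reduce
    rw [Finset.mem_powerset] at hT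
    by_cases h0 : A ∈ T
    · rw [if_pos h0]
      have hcard : T.card = (T.erase A).card + 1 := by
        rw [Finset.card_erase_of_mem h0]
        have : 1 ≤ T.card := Finset.card_pos.mpr ⟨A, h0⟩
        omega
      by_cases hne : (T.erase A).Nonempty
      · have hinf : T.inf id = (T.erase A).inf id := by
          conv_lhs => rw [← Finset.insert_erase h0]
          rw [Finset.inf_insert]
          apply inf_eq_right.mpr
          obtain ⟨B, hB⟩ := hne
          calc (T.erase A).inf id ≤ id B := Finset.inf_le hB
            _ ⊆ A := hmax B (hT (Finset.mem_of_mem_erase hB))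
        rw [if_pos ⟨A, h0⟩, if_pos hne, hinf, hcard, pow_succ]
        ring
      · have he : T.erase A = ∅ := Finset.not_nonempty_iff_eq_empty.mp hne
        have hTA : T = {A} := by
          rw [← Finset.insert_erase h0, he]
          rfl
        rw [if_pos ⟨A, h0⟩, if_neg hne, hTA]
        simp [hsup]
    · rw [if_neg h0]
      have hcard : (insert A T).card = T.card + 1 := Finset.card_insert_of_notMem h0
      by_cases hne : T.Nonempty
      · have hinf : (insert A T).inf id = T.inf id := by
          rw [Finset.inf_insert]
          apply inf_eq_right.mpr
          obtain ⟨B, hB⟩ := hne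
          calc T.inf id ≤ id B := Finset.inf_le hB
            _ ⊆ A := hmax B (hT hB)
        rw [if_pos hne, if_pos (Finset.insert_nonempty A T), hinf, hcard, pow_succ]
        ring
      · have hT0 : T = ∅ := Finset.not_nonempty_iff_eq_empty.mp hne
        subst hT0
        rw [if_neg hne, if_pos (Finset.insert_nonempty A ∅)]
        simp [hsup]
  · intro T hT _
    beta_reduce
    by_cases h0 : A ∈ T
    · rw [if_pos h0]
      intro h
      exact Finset.notMem_erase A T (by rw [h]; exact h0)
    · rw [if_neg h0]
      intro h
      exact h0 (by rw [← h]; exact Finset.mem_insert_self A T)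
  · intro T hT
    beta_reduce
    rw [Finset.mem_powerset] at hT ⊢
    by_cases h0 : A ∈ T
    · rw [if_pos h0]
      exact (Finset.erase_subset _ _).trans hT
    · rw [if_neg h0]
      exact Finset.insert_subset hA hT
  · intro T hT
    beta_reduce
    by_cases h0 : A ∈ T
    · rw [if_pos h0, if_neg (Finset.notMem_erase A T), Finset.insert_erase h0]
    · rw [if_neg h0, if_pos (Finset.mem_insert_self A T), Finset.erase_insert h0]

/-- The key formula: if all members of `C` pairwise intersect in at most one point, and
small sets have full rank, then `Δ(C) = r(U) - |U| + Σ_F (|F| - r(F))`. -/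
lemma deltaSet_formula (M : FinMatroid N) (C : Finset (Finset N))
    (hpt : ∀ A : Finset N, A.card ≤ 1 → M.r A = (A.card : ℤ))
    (hpair : ∀ F ∈ C, ∀ G ∈ C, F ≠ G → (F ∩ G).card ≤ 1) :
    M.deltaSet C = M.r (C.sup id) - ((C.sup id).card : ℤ)
      + ∑ F ∈ C, ((F.card : ℤ) - M.r F) := by
  have hmem : (∅ : Finset (Finset N)) ∈ C.powerset := Finset.empty_mem_powerset C
  have step1 : M.deltaSet C = M.r (C.sup id) +
      ∑ T ∈ C.powerset.erase ∅, (-1 : ℤ) ^ T.card *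
        M.r (if T.Nonempty then T.inf id else C.sup id) := by
    rw [deltaSet, ← Finset.add_sum_erase _ _ hmem]
    simp
  -- inclusion–exclusion
  have hIE : ∑ T ∈ C.powerset, (-1 : ℤ) ^ T.card * ((T.inf id).card : ℤ)
      = (Fintype.card N : ℤ) - ((C.sup id).card : ℤ) := by
    have h1 := Finset.inclusion_exclusion_card_inf_compl C (id : Finset N → Finset N)
    have h2 : C.inf (fun F => (id F)ᶜ) = (C.sup id)ᶜ := by
      rw [Finset.sup_eq_biUnion]
      ext x
      simp [Finset.mem_inf]
    rw [h2, Finset.card_compl] at h1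
    rw [← h1]
    have hc : (C.sup id).card ≤ Fintype.card N := Finset.card_le_card (Finset.subset_univ _)
    push_cast [Finset.card_compl]
    omega
  have hIE2 : ∑ T ∈ C.powerset.erase ∅, (-1 : ℤ) ^ T.card * ((T.inf id).card : ℤ)
      = - ((C.sup id).card : ℤ) := by
    have := Finset.add_sum_erase _ (fun T => (-1 : ℤ) ^ T.card * ((T.inf id).card : ℤ)) hmem
    rw [hIE] at this
    have hempty : ((∅ : Finset (Finset N)).inf id) = Finset.univ := rfl
    simp only [Finset.card_empty, pow_zero, one_mul, hempty] at this
    rw [Finset.card_univ] at this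
    omega
  -- error terms
  have step2 : ∑ T ∈ C.powerset.erase ∅, (-1 : ℤ) ^ T.card *
        M.r (if T.Nonempty then T.inf id else C.sup id)
      = ∑ T ∈ C.powerset.erase ∅, ((-1 : ℤ) ^ T.card * ((T.inf id).card : ℤ)
          + (-1 : ℤ) ^ T.card * (M.r (T.inf id) - ((T.inf id).card : ℤ))) := by
    apply Finset.sum_congr rfl
    intro T hT
    have hTne : T.Nonempty := by
      rw [Finset.mem_erase] at hT
      exact Finset.nonempty_iff_ne_empty.mpr hT.1
    rw [if_pos hTne]
    ring
  have step3 : ∑ T ∈ C.powerset.erase ∅, (-1 : ℤ) ^ T.card *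
        (M.r (T.inf id) - ((T.inf id).card : ℤ))
      = ∑ F ∈ C, ((F.card : ℤ) - M.r F) := by
    have himg : ∑ T ∈ C.image (fun F => ({F} : Finset (Finset N))),
        (-1 : ℤ) ^ T.card * (M.r (T.inf id) - ((T.inf id).card : ℤ))
        = ∑ F ∈ C, ((F.card : ℤ) - M.r F) := by
      rw [Finset.sum_image (fun x _ y _ h => Finset.singleton_injective h)]
      apply Finset.sum_congr rfl
      intro F _
      simp only [Finset.card_singleton, pow_one, Finset.inf_singleton, id_eq]
      ring
    rw [← himg]
    apply (Finset.sum_subset ?hsub ?hzero).symm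
    case hsub =>
      intro T hT
      obtain ⟨F, hF, rfl⟩ := Finset.mem_image.mp hT
      rw [Finset.mem_erase, Finset.mem_powerset]
      exact ⟨Finset.singleton_ne_empty F, Finset.singleton_subset_iff.mpr hF⟩
    case hzero =>
      intro T hT hTim
      rw [Finset.mem_erase, Finset.mem_powerset] at hT
      have hcard2 : 2 ≤ T.card := by
        rcases Nat.lt_or_ge T.card 2 with h | h
        · interval_cases hc : T.card
          · exact absurd (Finset.card_eq_zero.mp hc) hT.1
          · obtain ⟨F, rfl⟩ := Finset.card_eq_one.mp hc
            exact absurd (Finset.mem_image.mpr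
              ⟨F, Finset.singleton_subset_iff.mp hT.2, rfl⟩) hTim
        · exact h
      obtain ⟨F, hF, G, hG, hFG⟩ := Finset.one_lt_card.mp hcard2
      have hsubFG : T.inf id ⊆ F ∩ G :=
        Finset.subset_inter (Finset.le_iff_subset.mp (Finset.inf_le hF))
          (Finset.le_iff_subset.mp (Finset.inf_le hG))
      have hc1 : (T.inf id).card ≤ 1 :=
        le_trans (Finset.card_le_card hsubFG) (hpair F (hT.2 hF) G (hT.2 hG) hFG)
      rw [hpt _ hc1]
      ring
  rw [step1, step2, Finset.sum_add_distrib, hIE2, step3]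
  ring


/-- The rank function of a rank-`q+1` paving-type matroid with "long lines" `L`. -/
def pavingRank (q : ℕ) (L : Finset (Finset N)) (A : Finset N) : ℕ :=
  min A.card (if ∃ ℓ ∈ L, A ⊆ ℓ then q else q + 1)

lemma pavingRank_pos {q : ℕ} {L : Finset (Finset N)} {A : Finset N}
    (h : ∃ ℓ ∈ L, A ⊆ ℓ) : pavingRank q L A = min A.card q := by
  rw [pavingRank, if_pos h]

lemma pavingRank_neg {q : ℕ} {L : Finset (Finset N)} {A : Finset N}
    (h : ¬ ∃ ℓ ∈ L, A ⊆ ℓ) : pavingRank q L A = min A.card (q + 1) := by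
  rw [pavingRank, if_neg h]

lemma pavingRank_le_card (q : ℕ) (L : Finset (Finset N)) (A : Finset N) :
    pavingRank q L A ≤ A.card := min_le_left _ _

lemma pavingRank_mono (q : ℕ) (L : Finset (Finset N)) {A B : Finset N} (h : A ⊆ B) :
    pavingRank q L A ≤ pavingRank q L B := by
  have hc : A.card ≤ B.card := Finset.card_le_card h
  by_cases hB : ∃ ℓ ∈ L, B ⊆ ℓ
  · have hA : ∃ ℓ ∈ L, A ⊆ ℓ := by
      obtain ⟨ℓ, hℓ, hBl⟩ := hB; exact ⟨ℓ, hℓ, h.trans hBl⟩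
    rw [pavingRank_pos hA, pavingRank_pos hB]; omega
  · by_cases hA : ∃ ℓ ∈ L, A ⊆ ℓ
    · rw [pavingRank_pos hA, pavingRank_neg hB]; omega
    · rw [pavingRank_neg hA, pavingRank_neg hB]; omega

lemma pavingRank_submod (q : ℕ) (L : Finset (Finset N)) (hq : 2 ≤ q)
    (hL : ∀ ℓ ∈ L, ∀ ℓ' ∈ L, ℓ ≠ ℓ' → (ℓ ∩ ℓ').card + 1 ≤ q) (A B : Finset N) :
    pavingRank q L (A ∪ B) + pavingRank q L (A ∩ B) ≤
      pavingRank q L A + pavingRank q L B := by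
  by_cases hAB : A ⊆ B
  · rw [Finset.union_eq_right.mpr hAB, Finset.inter_eq_left.mpr hAB]
    omega
  by_cases hBA : B ⊆ A
  · rw [Finset.union_eq_left.mpr hBA, Finset.inter_eq_right.mpr hBA]
  have hia : (A ∩ B).card < A.card :=
    Finset.card_lt_card (Finset.ssubset_iff_subset_ne.mpr
      ⟨Finset.inter_subset_left, fun h => hAB (Finset.inter_eq_left.mp h)⟩)
  have hib : (A ∩ B).card < B.card :=
    Finset.card_lt_card (Finset.ssubset_iff_subset_ne.mpr
      ⟨Finset.inter_subset_right, fun h => hBA (Finset.inter_eq_right.mp h)⟩)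
  have hcard : (A ∪ B).card + (A ∩ B).card = A.card + B.card :=
    Finset.card_union_add_card_inter A B
  by_cases cU : ∃ ℓ ∈ L, A ∪ B ⊆ ℓ
  · have cA : ∃ ℓ ∈ L, A ⊆ ℓ := by
      obtain ⟨ℓ, hℓ, hs⟩ := cU; exact ⟨ℓ, hℓ, Finset.subset_union_left.trans hs⟩
    have cB : ∃ ℓ ∈ L, B ⊆ ℓ := by
      obtain ⟨ℓ, hℓ, hs⟩ := cU; exact ⟨ℓ, hℓ, Finset.subset_union_right.trans hs⟩
    have cI : ∃ ℓ ∈ L, A ∩ B ⊆ ℓ := by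
      obtain ⟨ℓ, hℓ, hs⟩ := cU
      exact ⟨ℓ, hℓ, Finset.inter_subset_left.trans (Finset.subset_union_left.trans hs)⟩
    rw [pavingRank_pos cU, pavingRank_pos cA, pavingRank_pos cB, pavingRank_pos cI]
    omega
  · by_cases cA : ∃ ℓ ∈ L, A ⊆ ℓ
    · have cI : ∃ ℓ ∈ L, A ∩ B ⊆ ℓ := by
        obtain ⟨ℓ, hℓ, hs⟩ := cA; exact ⟨ℓ, hℓ, Finset.inter_subset_left.trans hs⟩
      by_cases cB : ∃ ℓ ∈ L, B ⊆ ℓ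
      · -- the matroid-theoretic case: A, B contained in distinct lines
        obtain ⟨ℓ, hℓ, hsA⟩ := cA
        obtain ⟨ℓ', hℓ', hsB⟩ := cB
        have hne : ℓ ≠ ℓ' := by
          rintro rfl
          exact cU ⟨ℓ, hℓ, Finset.union_subset hsA hsB⟩
        have hint : (A ∩ B).card + 1 ≤ q := by
          have h1 : A ∩ B ⊆ ℓ ∩ ℓ' := Finset.inter_subset_inter hsA hsB
          have h2 := hL ℓ hℓ ℓ' hℓ' hne
          have h3 := Finset.card_le_card h1
          omega
        rw [pavingRank_neg cU, pavingRank_pos ⟨ℓ, hℓ, hsA⟩, pavingRank_pos ⟨ℓ', hℓ', hsB⟩,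
          pavingRank_pos cI]
        omega
      · rw [pavingRank_neg cU, pavingRank_pos cA, pavingRank_neg cB, pavingRank_pos cI]
        omega
    · by_cases cB : ∃ ℓ ∈ L, B ⊆ ℓ
      · have cI : ∃ ℓ ∈ L, A ∩ B ⊆ ℓ := by
          obtain ⟨ℓ, hℓ, hs⟩ := cB; exact ⟨ℓ, hℓ, Finset.inter_subset_right.trans hs⟩
        rw [pavingRank_neg cU, pavingRank_neg cA, pavingRank_pos cB, pavingRank_pos cI]
        omega
      · by_cases cI : ∃ ℓ ∈ L, A ∩ B ⊆ ℓ
        · rw [pavingRank_neg cU, pavingRank_neg cA, pavingRank_neg cB, pavingRank_pos cI]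
          omega
        · rw [pavingRank_neg cU, pavingRank_neg cA, pavingRank_neg cB, pavingRank_neg cI]
          omega

/-- Build a matroid from a paving-type rank function. -/
def paving (q : ℕ) (L : Finset (Finset N)) (hq : 2 ≤ q)
    (hL : ∀ ℓ ∈ L, ∀ ℓ' ∈ L, ℓ ≠ ℓ' → (ℓ ∩ ℓ').card + 1 ≤ q) : FinMatroid N where
  r A := (pavingRank q L A : ℤ)
  r_nonneg A := by positivity
  r_le_card A := by
    have := pavingRank_le_card q L A
    show (pavingRank q L A : ℤ) ≤ (A.card : ℤ)
    exact_mod_cast this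
  r_mono A B h := by
    have := pavingRank_mono q L h
    show (pavingRank q L A : ℤ) ≤ (pavingRank q L B : ℤ)
    exact_mod_cast this
  submodular A B := by
    have := pavingRank_submod q L hq hL A B
    show (pavingRank q L (A ∪ B) : ℤ) + (pavingRank q L (A ∩ B) : ℤ) ≤
      (pavingRank q L A : ℤ) + (pavingRank q L B : ℤ)
    exact_mod_cast this


/-! ### Generic paving-matroid lemmas -/

lemma paving_r_eq (q : ℕ) (L : Finset (Finset N)) (hq : 2 ≤ q)
    (hL : ∀ ℓ ∈ L, ∀ ℓ' ∈ L, ℓ ≠ ℓ' → (ℓ ∩ ℓ').card + 1 ≤ q) (A : Finset N) :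
    (paving q L hq hL).r A = (pavingRank q L A : ℤ) := rfl

lemma paving_r_small (q : ℕ) (L : Finset (Finset N)) (hq : 2 ≤ q)
    (hL : ∀ ℓ ∈ L, ∀ ℓ' ∈ L, ℓ ≠ ℓ' → (ℓ ∩ ℓ').card + 1 ≤ q) {A : Finset N}
    (hA : A.card ≤ q) : (paving q L hq hL).r A = (A.card : ℤ) := by
  rw [paving_r_eq]
  have : pavingRank q L A = A.card := by
    by_cases h : ∃ ℓ ∈ L, A ⊆ ℓ
    · rw [pavingRank_pos h]; omega
    · rw [pavingRank_neg h]; omega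
  rw [this]

lemma paving_line_isFlat (q : ℕ) (L : Finset (Finset N)) (hq : 2 ≤ q)
    (hL : ∀ ℓ ∈ L, ∀ ℓ' ∈ L, ℓ ≠ ℓ' → (ℓ ∩ ℓ').card + 1 ≤ q) {ℓ : Finset N}
    (hℓ : ℓ ∈ L) (hbig : q ≤ ℓ.card) : (paving q L hq hL).IsFlat ℓ := by
  intro x hx
  rw [paving_r_eq, paving_r_eq]
  have h1 : pavingRank q L ℓ = q := by
    rw [pavingRank_pos ⟨ℓ, hℓ, subset_rfl⟩]; omega
  have h2 : pavingRank q L (insert x ℓ) = q + 1 := by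
    have hnot : ¬ ∃ ℓ' ∈ L, insert x ℓ ⊆ ℓ' := by
      rintro ⟨ℓ', hℓ', hsub⟩
      have hsub2 : ℓ ⊆ ℓ' := (Finset.subset_insert x ℓ).trans hsub
      by_cases he : ℓ = ℓ'
      · exact hx (he ▸ hsub (Finset.mem_insert_self x ℓ))
      · have := hL ℓ hℓ ℓ' hℓ' he
        have : (ℓ ∩ ℓ').card = ℓ.card := by
          rw [Finset.inter_eq_left.mpr hsub2]
        omega
    rw [pavingRank_neg hnot]
    have : ℓ.card + 1 ≤ (insert x ℓ).card := by
      rw [Finset.card_insert_of_notMem hx]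
    omega
  rw [h1, h2]
  exact_mod_cast Nat.lt_succ_self q

lemma paving_flat_rank_le (q : ℕ) (L : Finset (Finset N)) (hq : 2 ≤ q)
    (hL : ∀ ℓ ∈ L, ∀ ℓ' ∈ L, ℓ ≠ ℓ' → (ℓ ∩ ℓ').card + 1 ≤ q) {F : Finset N}
    (hFlat : (paving q L hq hL).IsFlat F) (hne : F ≠ Finset.univ) :
    (paving q L hq hL).r F ≤ (q : ℤ) := by
  obtain ⟨x, hx⟩ : ∃ x, x ∉ F := by
    by_contra h
    push_neg at h
    exact hne (Finset.eq_univ_iff_forall.mpr h)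
  have h1 := hFlat x hx
  have h2 : pavingRank q L (insert x F) ≤ q + 1 := by
    by_cases h : ∃ ℓ ∈ L, insert x F ⊆ ℓ
    · rw [pavingRank_pos h]; omega
    · rw [pavingRank_neg h]; omega
  rw [paving_r_eq, paving_r_eq] at h1
  have : (q:ℤ) + 1 ≤ q + 1 := le_refl _
  have h2' : ((pavingRank q L (insert x F) : ℤ)) ≤ (q : ℤ) + 1 := by exact_mod_cast h2
  rw [paving_r_eq]
  have := lt_of_lt_of_le h1 h2'
  omega

lemma paving_r_le_top (q : ℕ) (L : Finset (Finset N)) (hq : 2 ≤ q)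
    (hL : ∀ ℓ ∈ L, ∀ ℓ' ∈ L, ℓ ≠ ℓ' → (ℓ ∩ ℓ').card + 1 ≤ q) (A : Finset N) :
    (paving q L hq hL).r A ≤ (q : ℤ) + 1 := by
  rw [paving_r_eq]
  have : pavingRank q L A ≤ q + 1 := by
    by_cases h : ∃ ℓ ∈ L, A ⊆ ℓ
    · rw [pavingRank_pos h]; omega
    · rw [pavingRank_neg h]; omega
  exact_mod_cast this

/-- In a matroid where all nontrivial flats have rank ≤ 2 and small sets are independent,
two distinct flats of rank ≤ 2 meet in at most one point. -/
lemma flat_inter_card_le_one (M : FinMatroid N) {F G : Finset N}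
    (hF : M.IsFlat F) (hG : M.IsFlat G) (hne : F ≠ G)
    (hrF : M.r F ≤ 2) (hrG : M.r G ≤ 2)
    (hsmall : ∀ A : Finset N, A.card ≤ 2 → M.r A = (A.card : ℤ)) :
    (F ∩ G).card ≤ 1 := by
  by_contra hcon
  push_neg at hcon
  have hI2 : 2 ≤ M.r (F ∩ G) := by
    obtain ⟨P, hP, hPcard⟩ := Finset.exists_subset_card_eq hcon
    calc (2 : ℤ) = M.r P := by rw [hsmall P (by omega), hPcard]; norm_num
      _ ≤ M.r (F ∩ G) := M.r_mono hP
  -- get a point of one flat outside the other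
  have hz : (∃ z, z ∈ G ∧ z ∉ F) ∨ (∃ z, z ∈ F ∧ z ∉ G) := by
    by_contra h
    push_neg at h
    exact hne (Finset.Subset.antisymm (fun x hx => by
      by_contra hxG
      exact absurd hx (by intro hh; exact hxG (by
        by_contra hc
        exact hc (h.2 x hh)))) h.1)
  -- wlog via a helper
  have main : ∀ (F G : Finset N), M.IsFlat F → M.IsFlat G → M.r F ≤ 2 → M.r G ≤ 2 →
      2 ≤ M.r (F ∩ G) → (∃ z, z ∈ G ∧ z ∉ F) → False := by
    intro F G hF hG hrF hrG hI2 ⟨z, hzG, hzF⟩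
    have hrF2 : M.r F = 2 := le_antisymm hrF (le_trans hI2 (M.r_mono Finset.inter_subset_left))
    have hflat := hF z hzF
    rw [hrF2] at hflat
    -- submodularity with A = F, B = (F ∩ G) ∪ {z}
    have hsub := M.submodular F ((F ∩ G) ∪ {z})
    have hU : F ∪ ((F ∩ G) ∪ {z}) = insert z F := by
      ext x
      simp only [Finset.mem_union, Finset.mem_inter, Finset.mem_singleton, Finset.mem_insert]
      tauto
    have hI : F ∩ ((F ∩ G) ∪ {z}) = F ∩ G := by
      ext x
      simp only [Finset.mem_union, Finset.mem_inter, Finset.mem_singleton]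
      constructor
      · rintro ⟨hxF, (⟨h1, h2⟩ | rfl)⟩
        · exact ⟨hxF, h2⟩
        · exact absurd hxF hzF
      · rintro ⟨hxF, hxG⟩
        exact ⟨hxF, Or.inl ⟨hxF, hxG⟩⟩
    rw [hU, hI] at hsub
    have hB : M.r ((F ∩ G) ∪ {z}) ≤ M.r G := by
      apply M.r_mono
      intro x hx
      rcases Finset.mem_union.mp hx with h | h
      · exact (Finset.mem_inter.mp h).2
      · rw [Finset.mem_singleton.mp h]; exact hzG
    omega
  rcases hz with h | h
  · exact main F G hF hG hrF hrG hI2 h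
  · exact main G F hG hF hrG hrF (by rwa [Finset.inter_comm] at hI2) h



lemma paving_flat_mem (q : ℕ) (L : Finset (Finset N)) (hq : 2 ≤ q)
    (hL : ∀ ℓ ∈ L, ∀ ℓ' ∈ L, ℓ ≠ ℓ' → (ℓ ∩ ℓ').card + 1 ≤ q) {F : Finset N}
    (hFlat : (paving q L hq hL).IsFlat F) (hne : F ≠ Finset.univ)
    (hbig : q < F.card) : F ∈ L := by
  have hrF := paving_flat_rank_le q L hq hL hFlat hne
  rw [paving_r_eq] at hrF
  have hrF' : pavingRank q L F ≤ q := by exact_mod_cast hrF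
  have hex : ∃ ℓ ∈ L, F ⊆ ℓ := by
    by_contra h
    rw [pavingRank_neg h] at hrF'
    omega
  obtain ⟨ℓ, hℓ, hsub⟩ := hex
  have : F = ℓ := by
    by_contra hFne
    have hx : ∃ x, x ∈ ℓ ∧ x ∉ F := by
      by_contra h
      push_neg at h
      exact hFne (Finset.Subset.antisymm hsub h)
    obtain ⟨x, hxℓ, hxF⟩ := hx
    have hflat := hFlat x hxF
    rw [paving_r_eq, paving_r_eq] at hflat
    have e1 : pavingRank q L F = q := by
      rw [pavingRank_pos ⟨ℓ, hℓ, hsub⟩]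
      omega
    have e2 : pavingRank q L (insert x F) = q := by
      rw [pavingRank_pos ⟨ℓ, hℓ, Finset.insert_subset hxℓ hsub⟩]
      have : F.card ≤ (insert x F).card := Finset.card_le_card (Finset.subset_insert x F)
      omega
    rw [e1, e2] at hflat
    exact lt_irrefl _ hflat
  rw [this]
  exact hℓ

lemma paving_r_refined (q : ℕ) (L : Finset (Finset N)) (hq : 2 ≤ q)
    (hL : ∀ ℓ ∈ L, ∀ ℓ' ∈ L, ℓ ≠ ℓ' → (ℓ ∩ ℓ').card + 1 ≤ q) {ℓ U : Finset N}
    (hℓ : ℓ ∈ L) (hsub : ℓ ⊆ U) (hbig : q ≤ ℓ.card) :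
    (paving q L hq hL).r U ≤ (q : ℤ) + ((U.card : ℤ) - (ℓ.card : ℤ)) := by
  by_cases he : U = ℓ
  · rw [he, paving_r_eq, pavingRank_pos ⟨ℓ, hℓ, subset_rfl⟩]
    have : min ℓ.card q = q := by omega
    rw [this]
    omega
  · have hlt : ℓ.card < U.card := by
      apply Finset.card_lt_card
      exact Finset.ssubset_iff_subset_ne.mpr ⟨hsub, fun h => he h.symm⟩
    have := paving_r_le_top q L hq hL U
    omega

/-! ### The wheel matroid -/

section Wheel

variable (n : ℕ) [NeZero n]

def hub : Finset (ZMod n × Bool) := Finset.univ.image (fun i : ZMod n => (i, false))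

def rim (i : ZMod n) : Finset (ZMod n × Bool) := {(i, false), (i, true), (i + 1, true)}

def wheelLines : Finset (Finset (ZMod n × Bool)) :=
  insert (hub n) (Finset.univ.image (rim n))

variable {n}

lemma mem_hub {x : ZMod n × Bool} : x ∈ hub n ↔ x.2 = false := by
  cases x with
  | mk i b =>
    simp only [hub, Finset.mem_image, Finset.mem_univ, true_and, Prod.mk.injEq]
    constructor
    · rintro ⟨j, _, rfl⟩; rfl
    · rintro rfl; exact ⟨i, rfl, rfl⟩

lemma mem_rim {i : ZMod n} {x : ZMod n × Bool} :
    x ∈ rim n i ↔ x = (i, false) ∨ x = (i, true) ∨ x = (i + 1, true) := by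
  simp [rim]

lemma hub_card : (hub n).card = n := by
  rw [hub, Finset.card_image_of_injective _ (fun a b h => (Prod.mk.injEq _ _ _ _).mp h |>.1)]
  simp [ZMod.card n]

lemma one_ne_zero_zmod (hn : 3 ≤ n) : (1 : ZMod n) ≠ 0 := by
  intro h
  have : ((1 : ℕ) : ZMod n) = 0 := by exact_mod_cast h
  rw [ZMod.natCast_eq_zero_iff] at this
  have := Nat.le_of_dvd one_pos this
  omega

lemma two_ne_zero_zmod (hn : 3 ≤ n) : (2 : ZMod n) ≠ 0 := by
  intro h
  have : ((2 : ℕ) : ZMod n) = 0 := by exact_mod_cast h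
  rw [ZMod.natCast_eq_zero_iff] at this
  have := Nat.le_of_dvd (by norm_num) this
  omega

lemma succ_ne_self_zmod (hn : 3 ≤ n) (i : ZMod n) : i + 1 ≠ i := by
  intro h
  have : (1 : ZMod n) = 0 := by
    have := congrArg (fun x => x - i) h
    simpa [add_comm, add_sub_cancel_left] using this
  exact one_ne_zero_zmod hn this

lemma rim_card (hn : 3 ≤ n) (i : ZMod n) : (rim n i).card = 3 := by
  rw [rim]
  rw [Finset.card_insert_of_notMem (by
    simp only [Finset.mem_insert, Finset.mem_singleton, Prod.mk.injEq]
    push_neg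
    exact ⟨fun _ => Bool.false_ne_true, fun _ => Bool.false_ne_true⟩)]
  rw [Finset.card_insert_of_notMem (by
    simp only [Finset.mem_singleton, Prod.mk.injEq]
    intro ⟨h, _⟩
    exact succ_ne_self_zmod hn i h.symm)]
  simp

lemma hub_ne_rim (hn : 3 ≤ n) (i : ZMod n) : hub n ≠ rim n i := by
  intro h
  have : (i, true) ∈ hub n := by
    rw [h]; rw [mem_rim]; right; left; rfl
  rw [mem_hub] at this
  simp at this

lemma rim_injective (hn : 3 ≤ n) : Function.Injective (rim n) := by
  intro i j h
  have : (i, false) ∈ rim n j := by rw [← h, mem_rim]; left; rfl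
  rw [mem_rim] at this
  rcases this with h1 | h1 | h1
  · exact (Prod.mk.injEq .. ▸ h1).1
  · exact absurd (Prod.mk.injEq .. ▸ h1).2 Bool.false_ne_true
  · exact absurd (Prod.mk.injEq .. ▸ h1).2 Bool.false_ne_true

lemma hub_inter_rim (hn : 3 ≤ n) (i : ZMod n) : (hub n ∩ rim n i).card ≤ 1 := by
  apply Finset.card_le_one.mpr
  intro x hx y hy
  rw [Finset.mem_inter, mem_hub, mem_rim] at hx hy
  obtain ⟨hx2, hx1⟩ := hx
  obtain ⟨hy2, hy1⟩ := hy
  have ex : x = (i, false) := by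
    rcases hx1 with h | h | h
    · exact h
    · rw [h] at hx2; simp at hx2
    · rw [h] at hx2; simp at hx2
  have ey : y = (i, false) := by
    rcases hy1 with h | h | h
    · exact h
    · rw [h] at hy2; simp at hy2
    · rw [h] at hy2; simp at hy2
  rw [ex, ey]

lemma rim_inter_rim (hn : 3 ≤ n) {i j : ZMod n} (hij : i ≠ j) :
    (rim n i ∩ rim n j).card ≤ 1 := by
  apply Finset.card_le_one.mpr
  intro x hx y hy
  rw [Finset.mem_inter, mem_rim, mem_rim] at hx hy
  obtain ⟨hxi, hxj⟩ := hx
  obtain ⟨hyi, hyj⟩ := hy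
  -- x cannot be the false point of both
  have hx' : x = (i + 1, true) ∧ x = (j, true) ∨ x = (i, true) ∧ x = (j + 1, true) := by
    rcases hxi with h1 | h1 | h1 <;> rcases hxj with h2 | h2 | h2 <;>
      first
        | (exfalso; rw [h1] at h2; simp [Prod.ext_iff] at h2 <;> tauto)
        | (exact absurd ((Prod.ext_iff.mp (h1 ▸ h2)).1) hij)
        | (left; exact ⟨h1, h2⟩)
        | (right; exact ⟨h1, h2⟩)
  have hy' : y = (i + 1, true) ∧ y = (j, true) ∨ y = (i, true) ∧ y = (j + 1, true) := by
    rcases hyi with h1 | h1 | h1 <;> rcases hyj with h2 | h2 | h2 <;>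
      first
        | (exfalso; rw [h1] at h2; simp [Prod.ext_iff] at h2 <;> tauto)
        | (exact absurd ((Prod.ext_iff.mp (h1 ▸ h2)).1) hij)
        | (left; exact ⟨h1, h2⟩)
        | (right; exact ⟨h1, h2⟩)
  have htwo : ¬ (j = i + 1 ∧ i = j + 1) := by
    rintro ⟨e1, e2⟩
    rw [e1] at e2
    have : (2 : ZMod n) = 0 := by
      have h22 : i = i + 2 := by linear_combination e2
      exact (left_eq_add.mp h22)
    exact two_ne_zero_zmod hn this
  rcases hx' with ⟨hx1, hx2⟩ | ⟨hx1, hx2⟩ <;> rcases hy' with ⟨hy1, hy2⟩ | ⟨hy1, hy2⟩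
  · rw [hx1, hy1]
  · exfalso
    apply htwo
    constructor
    · exact ((Prod.ext_iff.mp (hx1.symm.trans hx2)).1).symm
    · exact (Prod.ext_iff.mp (hy1.symm.trans hy2)).1
  · exfalso
    apply htwo
    constructor
    · exact ((Prod.ext_iff.mp (hy1.symm.trans hy2)).1).symm
    · exact (Prod.ext_iff.mp (hx1.symm.trans hx2)).1
  · rw [hx1, hy1]

lemma wheelLines_pairwise (hn : 3 ≤ n) :
    ∀ ℓ ∈ wheelLines n, ∀ ℓ' ∈ wheelLines n, ℓ ≠ ℓ' → (ℓ ∩ ℓ').card + 1 ≤ 2 := by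
  intro ℓ hℓ ℓ' hℓ' hne
  have hcases : ∀ m ∈ wheelLines n, m = hub n ∨ ∃ i, m = rim n i := by
    intro m hm
    rw [wheelLines, Finset.mem_insert] at hm
    rcases hm with h | h
    · exact Or.inl h
    · obtain ⟨i, _, rfl⟩ := Finset.mem_image.mp h
      exact Or.inr ⟨i, rfl⟩
  have key : (ℓ ∩ ℓ').card ≤ 1 := by
    rcases hcases ℓ hℓ with rfl | ⟨i, rfl⟩ <;> rcases hcases ℓ' hℓ' with rfl | ⟨j, rfl⟩
    · exact absurd rfl hne
    · exact hub_inter_rim hn j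
    · rw [Finset.inter_comm]; exact hub_inter_rim hn i
    · exact rim_inter_rim hn (fun h => hne (by rw [h]))
  omega

variable (n) in
/-- The wheel matroid of rank 3. -/
def wheelM (hn : 3 ≤ n) : FinMatroid (ZMod n × Bool) :=
  paving 2 (wheelLines n) (le_refl 2) (wheelLines_pairwise hn)

lemma zmod_succ_escape {S : Finset (ZMod n)} (hne : S.Nonempty)
    (hnu : S ≠ Finset.univ) : ∃ i ∈ S, i + 1 ∉ S := by
  by_contra h
  push_neg at h
  have hall : ∀ m : ℕ, ∀ i ∈ S, i + (m : ZMod n) ∈ S := by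
    intro m
    induction m with
    | zero => intro i hi; simpa using hi
    | succ m ih =>
      intro i hi
      have : i + ((m : ZMod n) + 1) ∈ S := by
        have h1 : i + (m : ZMod n) ∈ S := ih i hi
        have := h _ h1
        convert this using 1
        ring
      convert this using 2
      push_cast
      ring
  apply hnu
  obtain ⟨i0, hi0⟩ := hne
  apply Finset.eq_univ_iff_forall.mpr
  intro j
  have := hall (j - i0).val i0 hi0
  rwa [ZMod.natCast_rightInverse (j - i0), add_sub_cancel] at this

lemma hub_mem_wheelLines : hub n ∈ wheelLines n := Finset.mem_insert_self _ _

lemma rim_mem_wheelLines (i : ZMod n) : rim n i ∈ wheelLines n :=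
  Finset.mem_insert_of_mem (Finset.mem_image_of_mem _ (Finset.mem_univ i))

lemma wheelM_r_hub (hn : 3 ≤ n) : (wheelM n hn).r (hub n) = 2 := by
  rw [wheelM, paving_r_eq, pavingRank_pos ⟨hub n, hub_mem_wheelLines, subset_rfl⟩]
  rw [hub_card]
  have : min n 2 = 2 := by omega
  rw [this]
  rfl

lemma wheelM_r_rim (hn : 3 ≤ n) (i : ZMod n) : (wheelM n hn).r (rim n i) = 2 := by
  rw [wheelM, paving_r_eq, pavingRank_pos ⟨rim n i, rim_mem_wheelLines i, subset_rfl⟩]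
  rw [rim_card hn]
  rfl

theorem wheelM_nflat (hn : 3 ≤ n) : (wheelM n hn).NFlat n := by
  set M := wheelM n hn with hM
  apply nflat_of_deltaSet
  intro C hflats hcard
  by_cases htop : (Finset.univ : Finset (ZMod n × Bool)) ∈ C
  · exact le_of_eq (deltaSet_eq_zero_of_top M C Finset.univ htop
      (fun B _ => Finset.subset_univ B))
  -- all flats are proper
  have hproper : ∀ F ∈ C, F ≠ Finset.univ := fun F hF h => htop (h ▸ hF)
  have hrank : ∀ F ∈ C, M.r F ≤ 2 :=
    fun F hF => paving_flat_rank_le 2 _ _ _ (hflats F hF) (hproper F hF)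
  have hsmall : ∀ A : Finset (ZMod n × Bool), A.card ≤ 2 → M.r A = (A.card : ℤ) :=
    fun A hA => paving_r_small 2 _ _ _ hA
  have hpt : ∀ A : Finset (ZMod n × Bool), A.card ≤ 1 → M.r A = (A.card : ℤ) :=
    fun A hA => hsmall A (by omega)
  have hpair : ∀ F ∈ C, ∀ G ∈ C, F ≠ G → (F ∩ G).card ≤ 1 :=
    fun F hF G hG hne => flat_inter_card_le_one M (hflats F hF) (hflats G hG) hne
      (hrank F hF) (hrank G hG) hsmall
  rw [deltaSet_formula M C hpt hpair]
  set U := C.sup id with hUdef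
  set S := Finset.univ.filter (fun i : ZMod n => rim n i ∈ C) with hSdef
  set k := S.card with hkdef
  -- the union contains each member
  have hmemU : ∀ F ∈ C, F ⊆ U := fun F hF => Finset.le_sup (f := id) hF
  -- bound on the correction sum
  have hsum : ∑ F ∈ C, ((F.card : ℤ) - M.r F) ≤
      (if hub n ∈ C then (n : ℤ) - 2 else 0) + (k : ℤ) := by
    have hb : ∀ F ∈ C, ((F.card : ℤ) - M.r F) ≤
        (if F = hub n then (n : ℤ) - 2 else 0) +
        (if ∃ i, F = rim n i then (1 : ℤ) else 0) := by
      intro F hF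
      by_cases hc : F.card ≤ 2
      · rw [hsmall F hc]
        have h1 : (0:ℤ) ≤ (if F = hub n then (n : ℤ) - 2 else 0) := by
          split <;> [omega; omega]
        have h2 : (0:ℤ) ≤ (if ∃ i, F = rim n i then (1:ℤ) else 0) := by
          split <;> [omega; omega]
        omega
      · push_neg at hc
        have hmem := paving_flat_mem 2 _ _ _ (hflats F hF) (hproper F hF) hc
        rw [wheelLines, Finset.mem_insert] at hmem
        rcases hmem with rfl | hmem
        · rw [if_pos rfl, if_neg (by
            rintro ⟨i, hi⟩
            exact hub_ne_rim hn i hi)]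
          rw [wheelM_r_hub hn, hub_card]
          omega
        · obtain ⟨i, _, rfl⟩ := Finset.mem_image.mp hmem
          rw [if_neg (fun h => hub_ne_rim hn i h.symm), if_pos ⟨i, rfl⟩]
          rw [wheelM_r_rim hn, rim_card hn]
          norm_num
    calc ∑ F ∈ C, ((F.card : ℤ) - M.r F)
        ≤ ∑ F ∈ C, ((if F = hub n then (n : ℤ) - 2 else 0) +
            (if ∃ i, F = rim n i then (1 : ℤ) else 0)) := Finset.sum_le_sum hb
      _ = (if hub n ∈ C then (n : ℤ) - 2 else 0) + (k : ℤ) := by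
          rw [Finset.sum_add_distrib]
          congr 1
          · rw [Finset.sum_ite_eq' C (hub n) (fun _ => (n : ℤ) - 2)]
          · rw [Finset.sum_ite, Finset.sum_const, Finset.sum_const]
            simp only [nsmul_eq_mul, mul_one, mul_zero, add_zero]
            have himg : C.filter (fun F => ∃ i, F = rim n i) = S.image (rim n) := by
              ext F
              simp only [Finset.mem_filter, Finset.mem_image, hSdef, Finset.mem_univ,
                true_and]
              constructor
              · rintro ⟨hFC, i, rfl⟩
                exact ⟨i, hFC, rfl⟩
              · rintro ⟨i, hiC, rfl⟩
                exact ⟨hiC, i, rfl⟩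
            rw [himg, Finset.card_image_of_injective _ (rim_injective hn)]
  -- lower bounds on the size of the union
  set T2 := S ∪ S.image (fun i => i + 1) with hT2def
  have hUbig : (if hub n ∈ C then n else k) + T2.card ≤ U.card := by
    have hsubU : ((if hub n ∈ C then hub n else S.image (fun i => (i, false))) ∪
        T2.image (fun j => (j, true))) ⊆ U := by
      apply Finset.union_subset
      · split_ifs with hh
        · exact hmemU _ hh
        · intro x hx
          obtain ⟨i, hi, rfl⟩ := Finset.mem_image.mp hx
          rw [hSdef] at hi
          simp only [Finset.mem_filter] at hi
          exact hmemU _ hi.2 (by rw [mem_rim]; left; rfl)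
      · intro x hx
        obtain ⟨j, hj, rfl⟩ := Finset.mem_image.mp hx
        rw [hT2def] at hj
        rcases Finset.mem_union.mp hj with hj | hj
        · rw [hSdef] at hj
          simp only [Finset.mem_filter] at hj
          exact hmemU _ hj.2 (by rw [mem_rim]; right; left; rfl)
        · obtain ⟨i, hi, rfl⟩ := Finset.mem_image.mp hj
          rw [hSdef] at hi
          simp only [Finset.mem_filter] at hi
          exact hmemU _ hi.2 (by rw [mem_rim]; right; right; rfl)
    have hdisj : Disjoint (if hub n ∈ C then hub n else S.image (fun i => (i, false)))
        (T2.image (fun j => (j, true))) := by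
      rw [Finset.disjoint_left]
      intro x hx hx2
      obtain ⟨j, _, rfl⟩ := Finset.mem_image.mp hx2
      split_ifs at hx with hh
      · rw [mem_hub] at hx
        simp at hx
      · obtain ⟨i, _, hi⟩ := Finset.mem_image.mp hx
        exact Bool.false_ne_true (congrArg Prod.snd hi)
    have hcardeq : ((if hub n ∈ C then hub n else S.image (fun i => (i, false))) ∪
        T2.image (fun j => (j, true))).card = (if hub n ∈ C then n else k) + T2.card := by
      rw [Finset.card_union_of_disjoint hdisj]
      congr 1
      · split_ifs with hh
        · exact hub_card
        · exact Finset.card_image_of_injective _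
            (fun a b h => (Prod.mk.injEq _ _ _ _).mp h |>.1)
      · exact Finset.card_image_of_injective _
          (fun a b h => (Prod.mk.injEq _ _ _ _).mp h |>.1)
    rw [← hcardeq]
    exact Finset.card_le_card hsubU
  have hT2k : k ≤ T2.card := Finset.card_le_card Finset.subset_union_left
  have hT2k1 : S.Nonempty → S ≠ Finset.univ → k + 1 ≤ T2.card := by
    intro h1 h2
    obtain ⟨i, hiS, hi1⟩ := zmod_succ_escape h1 h2
    have : S ⊂ T2 := by
      rw [Finset.ssubset_def]
      refine ⟨Finset.subset_union_left, fun hsub => ?_⟩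
      exact hi1 (hsub (Finset.mem_union_right _ (Finset.mem_image_of_mem _ hiS)))
    exact Finset.card_lt_card this
  have hkn : k ≤ n := by
    calc k = S.card := rfl
      _ ≤ (Finset.univ : Finset (ZMod n)).card := Finset.card_le_card (Finset.subset_univ S)
      _ = n := by simp [ZMod.card n]
  have hSuniv : S = Finset.univ → k = n := by
    intro h
    rw [hkdef, h]
    simp [ZMod.card n]
  have hrU3 : M.r U ≤ 3 := by
    have := paving_r_le_top 2 (wheelLines n) (le_refl 2) (wheelLines_pairwise hn) U
    exact_mod_cast this
  have hrUc : M.r U ≤ (U.card : ℤ) := M.r_le_card U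
  -- case analysis
  by_cases hhub : hub n ∈ C
  · rw [if_pos hhub] at hsum hUbig
    have hkn1 : k + 1 ≤ n := by
      have hsub2 : S.image (rim n) ⊆ C.erase (hub n) := by
        intro F hF
        obtain ⟨i, hi, rfl⟩ := Finset.mem_image.mp hF
        rw [hSdef] at hi
        simp only [Finset.mem_filter] at hi
        exact Finset.mem_erase.mpr ⟨fun h => hub_ne_rim hn i h.symm, hi.2⟩
      have h1 : k ≤ (C.erase (hub n)).card := by
        rw [hkdef, ← Finset.card_image_of_injective S (rim_injective hn)]
        exact Finset.card_le_card hsub2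
      have h2 : (C.erase (hub n)).card = C.card - 1 := Finset.card_erase_of_mem hhub
      have h3 : 1 ≤ C.card := Finset.card_pos.mpr ⟨hub n, hhub⟩
      omega
    by_cases hk : S.Nonempty
    · have hSne : S ≠ Finset.univ := by
        intro h
        have := hSuniv h
        omega
      have hT2b := hT2k1 hk hSne
      have hUb : (U.card : ℤ) ≥ (n : ℤ) + (k : ℤ) + 1 := by
        have : n + (k + 1) ≤ U.card := le_trans (by omega) hUbig
        exact_mod_cast le_trans (by exact_mod_cast le_refl _) (Nat.cast_le.mpr this)
      omega
    · have hk0 : k = 0 := by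
        rw [hkdef, Finset.card_eq_zero, ← Finset.not_nonempty_iff_eq_empty]
        exact hk
      have hrUr := paving_r_refined 2 (wheelLines n) (le_refl 2) (wheelLines_pairwise hn)
        hub_mem_wheelLines (hmemU _ hhub) (by rw [hub_card]; omega)
      rw [hub_card] at hrUr
      have : M.r U ≤ 2 + ((U.card : ℤ) - (n : ℤ)) := by exact_mod_cast hrUr
      omega
  · rw [if_neg hhub] at hsum hUbig
    rcases Nat.lt_or_ge k 2 with hk2 | hk2
    · rcases Nat.lt_or_ge k 1 with hk1 | hk1
      · have hk0 : k = 0 := by omega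
        omega
      · -- k = 1 : the union contains a rim line
        have hk1' : k = 1 := by omega
        obtain ⟨i, hiS⟩ := Finset.card_pos.mp (show 0 < S.card by omega)
        have hiC : rim n i ∈ C := by
          rw [hSdef] at hiS
          simpa using hiS
        have hrUr := paving_r_refined 2 (wheelLines n) (le_refl 2) (wheelLines_pairwise hn)
          (rim_mem_wheelLines i) (hmemU _ hiC) (by rw [rim_card hn]; omega)
        rw [rim_card hn] at hrUr
        have hrUr' : M.r U ≤ 2 + ((U.card : ℤ) - 3) := hrUr
        have hUc3 : (3:ℕ) ≤ U.card := by
          calc (3:ℕ) = (rim n i).card := (rim_card hn i).symm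
            _ ≤ U.card := Finset.card_le_card (hmemU _ hiC)
        omega
    · by_cases hSne : S = Finset.univ
      · have hkn' : k = n := hSuniv hSne
        have hT2n : T2.card = n := by
          have : T2 ⊆ Finset.univ := Finset.subset_univ T2
          have h1 : T2.card ≤ n := by
            calc T2.card ≤ (Finset.univ : Finset (ZMod n)).card := Finset.card_le_card this
              _ = n := by simp [ZMod.card n]
          omega
        have h6 : k + n ≤ U.card := by omega
        have : ((k:ℤ)) + (n:ℤ) ≤ (U.card:ℤ) := by exact_mod_cast h6
        omega
      · have hT2b := hT2k1 (Finset.card_pos.mp (by omega)) hSne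
        have : k + (k+1) ≤ U.card := le_trans (by omega) hUbig
        have : ((k:ℤ)) + (k:ℤ) + 1 ≤ (U.card:ℤ) := by exact_mod_cast this
        omega

lemma sup_wheelLines : (wheelLines n).sup id = Finset.univ := by
  apply Finset.eq_univ_iff_forall.mpr
  intro x
  cases x with
  | mk i b =>
    cases b with
    | false =>
      apply Finset.mem_sup.mpr
      exact ⟨hub n, hub_mem_wheelLines, by simp only [id_eq]; exact mem_hub.mpr rfl⟩
    | true =>
      apply Finset.mem_sup.mpr
      exact ⟨rim n i, rim_mem_wheelLines i, by simp [id_eq, mem_rim]⟩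

lemma wheelM_r_univ (hn : 3 ≤ n) : (wheelM n hn).r Finset.univ = 3 := by
  rw [wheelM, paving_r_eq]
  have hnot : ¬ ∃ ℓ ∈ wheelLines n, (Finset.univ : Finset (ZMod n × Bool)) ⊆ ℓ := by
    rintro ⟨ℓ, hℓ, hsub⟩
    have huniv : ℓ = Finset.univ := Finset.Subset.antisymm (Finset.subset_univ ℓ) hsub
    have hcard : ℓ.card = 2 * n := by
      rw [huniv, Finset.card_univ]
      simp [ZMod.card n]
      ring
    rw [wheelLines, Finset.mem_insert] at hℓ
    rcases hℓ with rfl | hℓ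
    · rw [hub_card] at hcard
      omega
    · obtain ⟨i, _, rfl⟩ := Finset.mem_image.mp hℓ
      rw [rim_card hn] at hcard
      omega
  rw [pavingRank_neg hnot]
  have hcard : (Finset.univ : Finset (ZMod n × Bool)).card = 2 * n := by
    rw [Finset.card_univ]
    simp [ZMod.card n]
    ring
  rw [hcard]
  have : min (2 * n) (2 + 1) = 3 := by omega
  rw [this]
  rfl

lemma wheelLines_card_inter (hn : 3 ≤ n) :
    ∀ F ∈ wheelLines n, ∀ G ∈ wheelLines n, F ≠ G → (F ∩ G).card ≤ 1 := by
  intro F hF G hG hne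
  have := wheelLines_pairwise hn F hF G hG hne
  omega

lemma deltaSet_wheelLines (hn : 3 ≤ n) : (wheelM n hn).deltaSet (wheelLines n) = 1 := by
  have hpt : ∀ A : Finset (ZMod n × Bool), A.card ≤ 1 → (wheelM n hn).r A = (A.card : ℤ) :=
    fun A hA => paving_r_small 2 _ _ _ (by omega)
  rw [deltaSet_formula _ _ hpt (wheelLines_card_inter hn), sup_wheelLines]
  have hcard : (Finset.univ : Finset (ZMod n × Bool)).card = 2 * n := by
    rw [Finset.card_univ]
    simp [ZMod.card n]
    ring
  have hsum : ∑ F ∈ wheelLines n, ((F.card : ℤ) - (wheelM n hn).r F)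
      = (n : ℤ) - 2 + n := by
    rw [wheelLines, Finset.sum_insert (by
      rw [Finset.mem_image]
      rintro ⟨i, _, hi⟩
      exact hub_ne_rim hn i hi.symm)]
    rw [Finset.sum_image (fun i _ j _ h => rim_injective hn h)]
    have h1 : (hub n).card = n := hub_card
    have h2 : ∀ i : ZMod n, ((rim n i).card : ℤ) - (wheelM n hn).r (rim n i) = 1 := by
      intro i
      rw [rim_card hn, wheelM_r_rim hn]
      norm_num
    rw [h1, wheelM_r_hub hn]
    rw [Finset.sum_congr rfl (fun i _ => h2 i), Finset.sum_const, Finset.card_univ]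
    simp [ZMod.card n]
  rw [wheelM_r_univ hn, hcard, hsum]
  push_cast
  ring

def wheelFam (n : ℕ) [NeZero n] : Option (ZMod n) → Finset (ZMod n × Bool) :=
  fun o => match o with
  | none => hub n
  | some i => rim n i

lemma wheelFam_injective (hn : 3 ≤ n) : Function.Injective (wheelFam n) := by
  intro a b hab
  match a, b with
  | none, none => rfl
  | none, some i => exact absurd hab (hub_ne_rim hn i)
  | some i, none => exact absurd hab.symm (hub_ne_rim hn i)
  | some i, some j => rw [rim_injective hn hab]

lemma wheelFam_image : Finset.univ.image (wheelFam n) = wheelLines n := by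
  ext G
  simp only [Finset.mem_image, Finset.mem_univ, true_and, wheelLines, Finset.mem_insert]
  constructor
  · rintro ⟨o, rfl⟩
    match o with
    | none => exact Or.inl rfl
    | some i => exact Or.inr ⟨i, rfl⟩
  · rintro (rfl | h)
    · exact ⟨none, rfl⟩
    · obtain ⟨i, rfl⟩ := h
      exact ⟨some i, rfl⟩

lemma wheelFam_flat (hn : 3 ≤ n) (o : Option (ZMod n)) :
    (wheelM n hn).IsFlat (wheelFam n o) := by
  match o with
  | none =>
    exact paving_line_isFlat 2 _ _ _ hub_mem_wheelLines (show 2 ≤ (hub n).card by rw [hub_card]; omega)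
  | some i =>
    exact paving_line_isFlat 2 _ _ _ (rim_mem_wheelLines i) (show 2 ≤ (rim n i).card by rw [rim_card hn]; omega)

lemma wheelM_delta_pos (hn : 3 ≤ n) : 0 < (wheelM n hn).delta (wheelFam n) := by
  rw [delta_eq_deltaSet _ _ (wheelFam_injective hn), wheelFam_image,
    deltaSet_wheelLines hn]
  norm_num

end Wheel

/-! ### The rank-4 example for `n = 2` -/

def lines6 : Finset (Finset (Fin 6)) := {{0,1,2,3}, {0,1,4,5}, {2,3,4,5}}

lemma lines6_pairwise : ∀ ℓ ∈ lines6, ∀ ℓ' ∈ lines6, ℓ ≠ ℓ' → (ℓ ∩ ℓ').card + 1 ≤ 3 := by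
  decide

def sixM : FinMatroid (Fin 6) := paving 3 lines6 (by norm_num) lines6_pairwise

lemma sixM_nflat : sixM.NFlat 2 :=
  nflat_of_deltaSet _ 2 (fun C _ hc => deltaSet_le_of_card_le_two _ C hc)

def sixFam : Fin 3 → Finset (Fin 6) := ![{0,1,2,3}, {0,1,4,5}, {2,3,4,5}]

lemma sixFam_flat : ∀ i, sixM.IsFlat (sixFam i) := by decide

lemma sixM_delta_pos : 0 < sixM.delta sixFam := by decide

end FinMatroid

/-- For every integer `n ≥ 2` there is a finite matroid with flatness degree exactly
`n`: it is `n`-flat, but some family of at most `n + 1` flats has `Δ(C) > 0`. -/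
theorem exists_matroid_flatness_degree (n : ℕ) (hn : 2 ≤ n) :
    ∃ (N : Type) (_ : Fintype N) (_ : DecidableEq N) (M : FinMatroid N),
      M.NFlat n ∧
      ∃ (ι : Type) (_ : Fintype ι) (_ : DecidableEq ι) (F : ι → Finset N),
        Fintype.card ι ≤ n + 1 ∧ (∀ i, M.IsFlat (F i)) ∧ 0 < M.delta F := by
  rcases eq_or_lt_of_le hn with h2 | h3
  · refine ⟨Fin 6, inferInstance, inferInstance, FinMatroid.sixM, ?_, Fin 3, inferInstance,
      inferInstance, FinMatroid.sixFam, ?_, FinMatroid.sixFam_flat, FinMatroid.sixM_delta_pos⟩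
    · rw [← h2]
      exact FinMatroid.sixM_nflat
    · simp [← h2]
  · have hn3 : 3 ≤ n := h3
    haveI : NeZero n := ⟨by omega⟩
    refine ⟨ZMod n × Bool, inferInstance, inferInstance, FinMatroid.wheelM n hn3,
      FinMatroid.wheelM_nflat hn3, Option (ZMod n), inferInstance, inferInstance,
      FinMatroid.wheelFam n, ?_, FinMatroid.wheelFam_flat hn3,
      FinMatroid.wheelM_delta_pos hn3⟩
    rw [Fintype.card_option, ZMod.card n]
end

section
/- Every finite modular matroid is 3-flat: if M satisfies r(A ∪ B) + r(A ∩ B) = r(A) + r(B) for all flats A, B, then Δ(C) ≤ 0 for every family C of at most 3 flats of M. -/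
namespace FinMatroid

variable {N : Type} [Fintype N] [DecidableEq N]

lemma aux_rank_insert_le (M : FinMatroid N) {X Y : Finset N} (h : X ⊆ Y) (n : N)
    (hn : M.r (insert n X) ≤ M.r X) : M.r (insert n Y) ≤ M.r Y := by
  have hs := M.submodular Y (insert n X)
  have h1 : Y ∪ insert n X = insert n Y := by
    ext x
    simp only [Finset.mem_union, Finset.mem_insert]
    have := @h x
    tauto
  have h2 : M.r X ≤ M.r (Y ∩ insert n X) := by
    apply M.r_mono
    intro x hx
    simp only [Finset.mem_inter, Finset.mem_insert]
    exact ⟨h hx, Or.inr hx⟩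
  rw [h1] at hs
  linarith

lemma isFlat_inter (M : FinMatroid N) {A B : Finset N} (hA : M.IsFlat A) (hB : M.IsFlat B) :
    M.IsFlat (A ∩ B) := by
  intro n hn
  rw [Finset.mem_inter, not_and_or] at hn
  by_contra hle
  push_neg at hle
  rcases hn with h | h
  · exact absurd (M.aux_rank_insert_le Finset.inter_subset_left n hle) (not_le.mpr (hA n h))
  · exact absurd (M.aux_rank_insert_le Finset.inter_subset_right n hle) (not_le.mpr (hB n h))

lemma delta_comp_equiv (M : FinMatroid N) {ι κ : Type} [Fintype ι] [DecidableEq ι]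
    [Fintype κ] [DecidableEq κ] (e : κ ≃ ι) (F : ι → Finset N) :
    M.delta (F ∘ e) = M.delta F := by
  unfold delta
  apply Fintype.sum_equiv e.finsetCongr
  intro S
  have hmap : e.finsetCongr S = S.map e.toEmbedding := rfl
  have hu : (Finset.univ : Finset ι).sup F = (Finset.univ : Finset κ).sup (F ∘ e) :=
    ((Finset.map_univ_equiv e ▸ Finset.sup_map Finset.univ e.toEmbedding F :
      (Finset.univ : Finset ι).sup F = Finset.univ.sup (F ∘ e.toEmbedding))).trans rfl
  simp only [hmap, Finset.card_map, Finset.inf_map, Finset.map_nonempty, hu]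
  rfl

lemma delta_fin0 (M : FinMatroid N) (F : Fin 0 → Finset N) : M.delta F ≤ 0 := by
  unfold delta
  rw [show (Finset.univ : Finset (Finset (Fin 0))) = {∅} from by decide, Finset.sum_singleton]
  simp [M.r_empty]

lemma delta_fin1 (M : FinMatroid N) (F : Fin 1 → Finset N) : M.delta F ≤ 0 := by
  unfold delta
  rw [show (Finset.univ : Finset (Finset (Fin 1))) = {∅, {0}} from by decide,
    Finset.sum_insert (by decide), Finset.sum_singleton,
    show (Finset.univ : Finset (Fin 1)) = {0} from by decide]
  simp

lemma delta_fin2 (M : FinMatroid N) (F : Fin 2 → Finset N) : M.delta F ≤ 0 := by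
  unfold delta
  rw [show (Finset.univ : Finset (Finset (Fin 2))) = {∅, {0}, {1}, {0,1}} from by decide,
    Finset.sum_insert (by decide), Finset.sum_insert (by decide), Finset.sum_insert (by decide),
    Finset.sum_singleton, show (Finset.univ : Finset (Fin 2)) = {0,1} from by decide]
  simp only [Finset.not_nonempty_empty, if_false, Finset.insert_nonempty,
    Finset.singleton_nonempty, if_true, Finset.card_empty, Finset.card_singleton,
    Finset.inf_insert, Finset.inf_singleton, Finset.sup_insert, Finset.sup_singleton,
    Finset.sup_eq_union, Finset.inf_eq_inter,
    Finset.card_insert_of_notMem (by decide : (0:Fin 2) ∉ ({1} : Finset (Fin 2)))]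
  have := M.submodular (F 0) (F 1)
  ring_nf
  ring_nf at this
  linarith

lemma delta_fin3_s10 (M : FinMatroid N)
    (hmod : ∀ A B, M.IsFlat A → M.IsFlat B →
      M.r (A ∪ B) + M.r (A ∩ B) = M.r A + M.r B)
    (F : Fin 3 → Finset N) (hF : ∀ i, M.IsFlat (F i)) : M.delta F ≤ 0 := by
  unfold delta
  rw [show (Finset.univ : Finset (Finset (Fin 3))) =
      {∅, {0}, {1}, {2}, {0,1}, {0,2}, {1,2}, {0,1,2}} from by decide,
    Finset.sum_insert (by decide), Finset.sum_insert (by decide), Finset.sum_insert (by decide),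
    Finset.sum_insert (by decide), Finset.sum_insert (by decide), Finset.sum_insert (by decide),
    Finset.sum_insert (by decide), Finset.sum_singleton,
    show (Finset.univ : Finset (Fin 3)) = {0,1,2} from by decide]
  simp only [Finset.not_nonempty_empty, if_false, Finset.insert_nonempty,
    Finset.singleton_nonempty, if_true, Finset.card_empty, Finset.card_singleton,
    Finset.inf_insert, Finset.inf_singleton, Finset.sup_insert, Finset.sup_singleton,
    Finset.sup_eq_union, Finset.inf_eq_inter,
    Finset.card_insert_of_notMem (by decide : (0:Fin 3) ∉ ({1} : Finset (Fin 3))),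
    Finset.card_insert_of_notMem (by decide : (0:Fin 3) ∉ ({2} : Finset (Fin 3))),
    Finset.card_insert_of_notMem (by decide : (1:Fin 3) ∉ ({2} : Finset (Fin 3))),
    Finset.card_insert_of_notMem (by decide : (0:Fin 3) ∉ ({1,2} : Finset (Fin 3)))]
  set A := F 0; set B := F 1; set C := F 2
  have hAB := hmod A B (hF 0) (hF 1)
  have hACBC := hmod (A ∩ C) (B ∩ C) (M.isFlat_inter (hF 0) (hF 2)) (M.isFlat_inter (hF 1) (hF 2))
  have hsub := M.submodular (A ∪ B) C
  have e1 : (A ∩ C) ∩ (B ∩ C) = A ∩ (B ∩ C) := by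
    ext x; simp only [Finset.mem_inter]; tauto
  have e2 : (A ∪ B) ∩ C = (A ∩ C) ∪ (B ∩ C) := by
    ext x; simp only [Finset.mem_inter, Finset.mem_union]; tauto
  have e3 : A ∪ B ∪ C = A ∪ (B ∪ C) := by
    ext x; simp only [Finset.mem_union]; tauto
  rw [e1] at hACBC
  rw [e2, e3] at hsub
  ring_nf
  ring_nf at hAB hACBC hsub
  linarith


lemma delta_fin_le3 (M : FinMatroid N)
    (hmod : ∀ A B, M.IsFlat A → M.IsFlat B →
      M.r (A ∪ B) + M.r (A ∩ B) = M.r A + M.r B)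
    {n : ℕ} (hn : n ≤ 3) (F : Fin n → Finset N) (hF : ∀ i, M.IsFlat (F i)) :
    M.delta F ≤ 0 := by
  match n, hn, F, hF with
  | 0, _, F, hF => exact M.delta_fin0 F
  | 1, _, F, hF => exact M.delta_fin1 F
  | 2, _, F, hF => exact M.delta_fin2 F
  | 3, _, F, hF => exact M.delta_fin3_s10 hmod F hF

end FinMatroid

/-- Every finite modular matroid is 3-flat: if `r(A ∪ B) + r(A ∩ B) = r(A) + r(B)`
for all flats `A, B`, then `Δ(C) ≤ 0` for every family `C` of at most 3 flats. -/
theorem threeFlat_of_modular {N : Type} [Fintype N] [DecidableEq N]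
    (M : FinMatroid N)
    (hmod : ∀ A B, M.IsFlat A → M.IsFlat B →
      M.r (A ∪ B) + M.r (A ∩ B) = M.r A + M.r B) :
    M.NFlat 3 := by
  intro ι hι hδ F hcard hflat
  let e := @Fintype.equivFin ι hι
  have h := M.delta_fin_le3 hmod hcard (F ∘ e.symm) (fun i => hflat _)
  rwa [@FinMatroid.delta_comp_equiv N _ _ M ι (Fin (@Fintype.card ι hι)) hι hδ _ _ e.symm F] at h
end
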